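/- arXiv:1805.12063 — 5 statements merged into one kernel-verified Lean document; each statement's English description precedes it below -/
import Mathlib

section
/- Let d ≥ 2 be an integer and let (ξ_j)_{j≥0} be a sequence of unit vectors in ℝ^d whose set of terms {ξ_j : j ≥ 0} is dense in the unit sphere S^{d−1}. Then the set K = {0} ∪ ⋃_{j≥0} T_j asymptotically and omnidirectionally contains arithmetic progressions: for every integer k ≥ 3, every ε ∈ (0,1) and every unit vector e ∈ S^{d−1}, K contains a (k,ε,{e})-AP. -/
open Metric Set

/-- `P` is an arithmetic patch of size `k` and scale `Δ` with orientation `e : Fin m → ℝ^d`. -/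
def IsAPatch {d : ℕ} (m k : ℕ) (Δ : ℝ) (e : Fin m → EuclideanSpace ℝ (Fin d))
    (P : Set (EuclideanSpace ℝ (Fin d))) : Prop :=
  ∃ t : EuclideanSpace ℝ (Fin d),
    P = {p | ∃ x : Fin m → Fin k, p = t + Δ • ∑ i, ((x i : ℕ) : ℝ) • e i}

/-- `Q` is a `(k, ε, {e₁,…,eₘ})`-AP with approximating arithmetic patch of scale `Δ`. -/
def IsAPScale {d : ℕ} (m k : ℕ) (ε Δ : ℝ) (e : Fin m → EuclideanSpace ℝ (Fin d))
    (Q : Set (EuclideanSpace ℝ (Fin d))) : Prop :=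
  0 < Δ ∧ ∃ P : Set (EuclideanSpace ℝ (Fin d)), IsAPatch m k Δ e P ∧
    Q.ncard = P.ncard ∧ ∀ x ∈ P, Metric.infDist x Q ≤ ε * Δ

/-- `Q` is a `(k, ε, {e₁,…,eₘ})`-AP. -/
def IsAP {d : ℕ} (m k : ℕ) (ε : ℝ) (e : Fin m → EuclideanSpace ℝ (Fin d))
    (Q : Set (EuclideanSpace ℝ (Fin d))) : Prop :=
  ∃ Δ : ℝ, IsAPScale m k ε Δ e Q

/-- `N(E, r)`: the smallest number of open sets of diameter at most `r` needed to cover `E`. -/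
noncomputable def coverNumber {X : Type*} [MetricSpace X] (E : Set X) (r : ℝ) : ℕ :=
  sInf {n : ℕ | ∃ 𝒰 : Finset (Set X), 𝒰.card = n ∧
    (∀ U ∈ 𝒰, IsOpen U ∧ Metric.diam U ≤ r) ∧ E ⊆ ⋃₀ ↑𝒰}

/-- The Assouad dimension of `F`. -/
noncomputable def assouadDim {X : Type*} [MetricSpace X] (F : Set X) : ℝ :=
  sInf {σ : ℝ | 0 ≤ σ ∧ ∃ C > 0, ∀ x ∈ F, ∀ R > 0, ∀ r ∈ Set.Ioo 0 R,
    (coverNumber (Metric.closedBall x R ∩ F) r : ℝ) ≤ C * (R / r) ^ σ}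

/-- `ℓ({e₁,…,eₘ})`: the minimum of `‖ω₁e₁ + ⋯ + ωₘeₘ‖` over `ω ∈ {0,1}^m \ {0}`. -/
noncomputable def ellOf {d m : ℕ} (e : Fin m → EuclideanSpace ℝ (Fin d)) : ℝ :=
  sInf {l : ℝ | ∃ ω : Fin m → Bool, ω ≠ (fun _ => false) ∧
    l = ‖∑ i, if ω i then e i else (0 : EuclideanSpace ℝ (Fin d))‖}

/-- `F` asymptotically and omnidirectionally contains arithmetic progressions. -/
def AsympOmniContainsAPs {d : ℕ} (F : Set (EuclideanSpace ℝ (Fin d))) : Prop :=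
  ∀ k : ℕ, 3 ≤ k → ∀ ε ∈ Set.Ioo (0 : ℝ) 1, ∀ e : EuclideanSpace ℝ (Fin d), ‖e‖ = 1 →
    ∃ Q ⊆ F, IsAP 1 k ε (fun _ => e) Q

/-- The first standard basis vector `e₁ = (1,0,…,0)` of `ℝ^d`. -/
noncomputable def stdE₁ (d : ℕ) : EuclideanSpace ℝ (Fin d) :=
  (EuclideanSpace.equiv (Fin d) ℝ).symm (fun i => if (i : ℕ) = 0 then 1 else 0)

/-- The segment `T_j = {t ξ_j + 2⁻ʲ e₁ : t ∈ [-2^{-(j+2)}, 2^{-(j+2)}]}`. -/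
noncomputable def Tseg {d : ℕ} (ξ : ℕ → EuclideanSpace ℝ (Fin d)) (j : ℕ) :
    Set (EuclideanSpace ℝ (Fin d)) :=
  (fun t : ℝ => t • ξ j + ((1 : ℝ) / 2 ^ j) • stdE₁ d) ''
    Set.Icc (-((1 : ℝ) / 2 ^ (j + 2))) ((1 : ℝ) / 2 ^ (j + 2))

/-- `K = {0} ∪ ⋃_j T_j`. -/
noncomputable def Kset {d : ℕ} (ξ : ℕ → EuclideanSpace ℝ (Fin d)) :
    Set (EuclideanSpace ℝ (Fin d)) :=
  {0} ∪ ⋃ j : ℕ, Tseg ξ j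

/-- The diamond `D_j = {t₁ξ_{1j} + ⋯ + tₘξ_{mj} + 2⁻ʲ e₁ : tᵢ ∈ [-1/(m 2^{j+2}), 1/(m 2^{j+2})]}`. -/
noncomputable def Dcell {d : ℕ} (m : ℕ) (ξ : ℕ → Fin m → EuclideanSpace ℝ (Fin d)) (j : ℕ) :
    Set (EuclideanSpace ℝ (Fin d)) :=
  (fun t : Fin m → ℝ => (∑ i, t i • ξ j i) + ((1 : ℝ) / 2 ^ j) • stdE₁ d) ''
    {t | ∀ i, t i ∈ Set.Icc (-(1 / ((m : ℝ) * 2 ^ (j + 2)))) (1 / ((m : ℝ) * 2 ^ (j + 2)))}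

/-- `K = {0} ∪ ⋃_j D_j`. -/
noncomputable def KsetD {d : ℕ} (m : ℕ) (ξ : ℕ → Fin m → EuclideanSpace ℝ (Fin d)) :
    Set (EuclideanSpace ℝ (Fin d)) :=
  {0} ∪ ⋃ j : ℕ, Dcell m ξ j

/-- If the unit vectors `ξ_j` are dense in the unit sphere `S^{d-1}`, then
`K = {0} ∪ ⋃_j T_j` asymptotically and omnidirectionally contains arithmetic progressions. -/
theorem Kset_asympOmni (d : ℕ) (hd : 2 ≤ d) (ξ : ℕ → EuclideanSpace ℝ (Fin d))
    (hξ : ∀ j, ‖ξ j‖ = 1)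
    (hdense : Metric.sphere (0 : EuclideanSpace ℝ (Fin d)) 1 ⊆ closure (Set.range ξ)) :
    AsympOmniContainsAPs (Kset ξ) := by
  intro k hk ε hε e he
  obtain ⟨hε0, hε1⟩ := hε
  have hk1 : (1 : ℝ) ≤ (k : ℝ) - 1 := by
    have : (2 : ℝ) ≤ (k : ℝ) := by exact_mod_cast (by omega : 2 ≤ k)
    linarith
  have hkm1 : (0 : ℝ) < (k : ℝ) - 1 := by linarith
  have hkpos : (0 : ℝ) < (k : ℝ) := by linarith
  have hδpos : 0 < ε / ((k : ℝ) - 1) := div_pos hε0 hkm1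
  have he' : e ∈ Metric.sphere (0 : EuclideanSpace ℝ (Fin d)) 1 := by
    simp [mem_sphere_zero_iff_norm, he]
  have hcl := hdense he'
  rw [Metric.mem_closure_iff] at hcl
  obtain ⟨b, hbmem, hb⟩ := hcl _ hδpos
  obtain ⟨j, rfl⟩ := hbmem
  have h2pos : (0 : ℝ) < 2 ^ (j + 2) := by positivity
  set Δ : ℝ := 1 / ((k : ℝ) * 2 ^ (j + 2)) with hΔdef
  have hΔpos : 0 < Δ := by positivity
  set c : EuclideanSpace ℝ (Fin d) := ((1 : ℝ) / 2 ^ j) • stdE₁ d with hc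
  set q : Fin k → EuclideanSpace ℝ (Fin d) :=
    fun y => (((y : ℕ) : ℝ) * Δ) • ξ j + c with hq
  set p : Fin k → EuclideanSpace ℝ (Fin d) :=
    fun y => (((y : ℕ) : ℝ) * Δ) • e + c with hp
  have hinj : ∀ v : EuclideanSpace ℝ (Fin d), ‖v‖ = 1 →
      Function.Injective (fun y : Fin k => (((y : ℕ) : ℝ) * Δ) • v + c) := by
    intro v hv a b hab
    have hv0 : v ≠ 0 := by
      intro h0; rw [h0, norm_zero] at hv; norm_num at hv
    simp only [add_left_inj] at hab
    have := smul_left_injective ℝ hv0 hab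
    have : ((a : ℕ) : ℝ) = ((b : ℕ) : ℝ) := mul_right_cancel₀ hΔpos.ne' this
    exact Fin.ext (by exact_mod_cast this)
  have hbound : ∀ y : Fin k, ((y : ℕ) : ℝ) * Δ ≤ ((k : ℝ) - 1) * Δ := by
    intro y
    have : ((y : ℕ) : ℝ) ≤ (k : ℝ) - 1 := by
      have := y.is_lt
      have : ((y : ℕ) : ℝ) < (k : ℝ) := by exact_mod_cast this
      have hint : ((y : ℕ) : ℝ) ≤ (k : ℝ) - 1 := by
        have : (y : ℕ) + 1 ≤ k := y.is_lt
        have : (((y : ℕ) : ℝ) + 1) ≤ (k : ℝ) := by exact_mod_cast this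
        linarith
      exact hint
    nlinarith [hΔpos.le]
  have hrange : ((k : ℝ) - 1) * Δ ≤ 1 / 2 ^ (j + 2) := by
    rw [hΔdef, mul_one_div, div_le_div_iff₀ (by positivity) h2pos]
    nlinarith
  refine ⟨Set.range q, ?_, Δ, hΔpos, Set.range p, ⟨c, ?_⟩, ?_, ?_⟩
  · -- range q ⊆ Kset ξ
    rintro z ⟨y, rfl⟩
    right
    refine Set.mem_iUnion.2 ⟨j, ⟨((y : ℕ) : ℝ) * Δ, ⟨?_, ?_⟩, rfl⟩⟩
    · have : (0 : ℝ) ≤ ((y : ℕ) : ℝ) * Δ := by positivity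
      have h1 : -((1 : ℝ) / 2 ^ (j + 2)) ≤ 0 := neg_nonpos.2 (by positivity)
      linarith
    · exact le_trans (hbound y) hrange
  · -- patch equality
    ext z
    constructor
    · rintro ⟨y, rfl⟩
      exact ⟨fun _ => y, by
        simp only [hp, Fin.sum_univ_one, smul_smul]
        rw [add_comm, mul_comm]⟩
    · rintro ⟨x, rfl⟩
      exact ⟨x 0, by
        simp only [hp, Fin.sum_univ_one, smul_smul]
        rw [add_comm, mul_comm]⟩
  · -- cardinalities
    have h1 : (Set.range q).ncard = k := by
      rw [← Nat.card_coe_set_eq, Nat.card_range_of_injective (hinj _ (hξ j)), Nat.card_eq_fintype_card, Fintype.card_fin]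
    have h2 : (Set.range p).ncard = k := by
      rw [← Nat.card_coe_set_eq, Nat.card_range_of_injective (hinj _ he), Nat.card_eq_fintype_card, Fintype.card_fin]
    rw [h1, h2]
  · -- infDist bound
    rintro x ⟨y, rfl⟩
    have hmem : q y ∈ Set.range q := ⟨y, rfl⟩
    refine le_trans (Metric.infDist_le_dist_of_mem hmem) ?_
    have : dist (p y) (q y) = (((y : ℕ) : ℝ) * Δ) * ‖e - ξ j‖ := by
      rw [dist_eq_norm]
      have : p y - q y = (((y : ℕ) : ℝ) * Δ) • (e - ξ j) := by
        simp only [hp, hq, smul_sub]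
        abel
      rw [this, norm_smul, Real.norm_eq_abs, abs_of_nonneg (by positivity)]
    rw [this]
    have hdist : ‖e - ξ j‖ ≤ ε / ((k : ℝ) - 1) := by
      rw [dist_eq_norm] at hb; linarith
    calc (((y : ℕ) : ℝ) * Δ) * ‖e - ξ j‖
        ≤ (((k : ℝ) - 1) * Δ) * (ε / ((k : ℝ) - 1)) := by
          apply mul_le_mul (hbound y) hdist (norm_nonneg _)
          positivity
      _ = ε * Δ := by field_simp
end

section
/- Let d ≥ 2 be an integer and let (ξ_j)_{j≥0} be any sequence of unit vectors in ℝ^d. For the set K = {0} ∪ ⋃_{j≥0} T_j there exists a constant C > 0 such that N(B(x,R) ∩ K, r) ≤ C·R/r for all x ∈ K and all 0 < r < R. In particular, the Assouad dimension of K is at most 1. -/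
open Metric Set

lemma norm_stdE₁ (d : ℕ) (hd : 1 ≤ d) : ‖stdE₁ d‖ = 1 := by
  have h0 : 0 < d := hd
  have he : stdE₁ d = EuclideanSpace.single (⟨0, h0⟩ : Fin d) (1:ℝ) := by
    ext i
    simp [stdE₁, EuclideanSpace.single_apply, Fin.ext_iff, eq_comm]
  rw [he, EuclideanSpace.norm_single]
  norm_num

noncomputable def pm {d : ℕ} (ξ : ℕ → EuclideanSpace ℝ (Fin d)) (j : ℕ) (t : ℝ) :
    EuclideanSpace ℝ (Fin d) := t • ξ j + ((1:ℝ)/2^j) • stdE₁ d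

lemma mem_Tseg_iff {d : ℕ} (ξ : ℕ → EuclideanSpace ℝ (Fin d)) (j : ℕ)
    (y : EuclideanSpace ℝ (Fin d)) :
    y ∈ Tseg ξ j ↔ ∃ t : ℝ, |t| ≤ (1:ℝ)/2^(j+2) ∧ pm ξ j t = y := by
  constructor
  · rintro ⟨t, ht, rfl⟩
    exact ⟨t, abs_le.2 ⟨ht.1, ht.2⟩, rfl⟩
  · rintro ⟨t, ht, rfl⟩
    exact ⟨t, ⟨(abs_le.1 ht).1, (abs_le.1 ht).2⟩, rfl⟩

lemma dist_pm {d : ℕ} (ξ : ℕ → EuclideanSpace ℝ (Fin d)) (hξ : ∀ j, ‖ξ j‖ = 1)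
    (j : ℕ) (t s : ℝ) : dist (pm ξ j t) (pm ξ j s) = |t - s| := by
  rw [dist_eq_norm]
  have : pm ξ j t - pm ξ j s = (t - s) • ξ j := by
    simp [pm, sub_smul]
  rw [this, norm_smul, hξ, Real.norm_eq_abs, mul_one]

lemma norm_pm_le {d : ℕ} (hd : 1 ≤ d) (ξ : ℕ → EuclideanSpace ℝ (Fin d))
    (hξ : ∀ j, ‖ξ j‖ = 1) (j : ℕ) (t : ℝ) (ht : |t| ≤ (1:ℝ)/2^(j+2)) :
    ‖pm ξ j t‖ ≤ (5/4) * ((2:ℝ)^j)⁻¹ := by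
  have h1 : ‖((1:ℝ)/2^j) • stdE₁ d‖ = ((2:ℝ)^j)⁻¹ := by
    rw [norm_smul, norm_stdE₁ d hd, mul_one, Real.norm_eq_abs, abs_of_pos (by positivity)]
    rw [one_div]
  have h2 : ‖t • ξ j‖ = |t| := by rw [norm_smul, hξ, Real.norm_eq_abs, mul_one]
  have h3 : (1:ℝ)/2^(j+2) = (1/4) * ((2:ℝ)^j)⁻¹ := by
    rw [pow_add]; field_simp; ring
  calc ‖pm ξ j t‖ ≤ ‖t • ξ j‖ + ‖((1:ℝ)/2^j) • stdE₁ d‖ := norm_add_le _ _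
    _ ≤ (1/4) * ((2:ℝ)^j)⁻¹ + ((2:ℝ)^j)⁻¹ := by rw [h1, h2]; linarith [ht, h3 ▸ ht]
    _ = (5/4) * ((2:ℝ)^j)⁻¹ := by ring

lemma norm_pm_ge {d : ℕ} (hd : 1 ≤ d) (ξ : ℕ → EuclideanSpace ℝ (Fin d))
    (hξ : ∀ j, ‖ξ j‖ = 1) (j : ℕ) (t : ℝ) (ht : |t| ≤ (1:ℝ)/2^(j+2)) :
    (3/4) * ((2:ℝ)^j)⁻¹ ≤ ‖pm ξ j t‖ := by
  have h1 : ‖((1:ℝ)/2^j) • stdE₁ d‖ = ((2:ℝ)^j)⁻¹ := by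
    rw [norm_smul, norm_stdE₁ d hd, mul_one, Real.norm_eq_abs, abs_of_pos (by positivity)]
    rw [one_div]
  have h2 : ‖t • ξ j‖ = |t| := by rw [norm_smul, hξ, Real.norm_eq_abs, mul_one]
  have h3 : (1:ℝ)/2^(j+2) = (1/4) * ((2:ℝ)^j)⁻¹ := by
    rw [pow_add]; field_simp; ring
  have h4 : ‖((1:ℝ)/2^j) • stdE₁ d‖ - ‖t • ξ j‖ ≤ ‖pm ξ j t‖ := by
    have h5 := norm_sub_norm_le (((1:ℝ)/2^j) • stdE₁ d) (-(t • ξ j))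
    simp only [norm_neg, sub_neg_eq_add] at h5
    calc ‖((1:ℝ)/2^j) • stdE₁ d‖ - ‖t • ξ j‖ ≤ ‖((1:ℝ)/2^j) • stdE₁ d + t • ξ j‖ := h5
      _ = ‖pm ξ j t‖ := by rw [pm, add_comm]
  rw [h1, h2] at h4
  linarith [h3 ▸ ht]

lemma sum_inv_pow_le (J : Finset ℕ) (c : ℝ) (hc : 0 ≤ c)
    (h : ∀ j ∈ J, ((2:ℝ)^j)⁻¹ ≤ c) : ∑ j ∈ J, ((2:ℝ)^j)⁻¹ ≤ 2 * c := by
  rcases J.eq_empty_or_nonempty with rfl | hJ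
  · simp; positivity
  · set k := J.min' hJ with hk
    set m := J.max' hJ with hm
    have hsub : J ⊆ Finset.Icc k m := fun j hj => Finset.mem_Icc.2 ⟨J.min'_le j hj, J.le_max' j hj⟩
    have h1 : ∑ j ∈ J, ((2:ℝ)^j)⁻¹ ≤ ∑ j ∈ Finset.Icc k m, ((2:ℝ)^j)⁻¹ :=
      Finset.sum_le_sum_of_subset_of_nonneg hsub (fun j _ _ => by positivity)
    have h2 : ∑ j ∈ Finset.Icc k m, ((2:ℝ)^j)⁻¹
        = ∑ i ∈ Finset.range (m + 1 - k), ((2:ℝ)^(k + i))⁻¹ := by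
      rw [← Finset.Ico_add_one_right_eq_Icc, Finset.sum_Ico_eq_sum_range]
    have h3 : ∑ i ∈ Finset.range (m + 1 - k), ((2:ℝ)^(k + i))⁻¹
        = ((2:ℝ)^k)⁻¹ * ∑ i ∈ Finset.range (m + 1 - k), ((1:ℝ)/2)^i := by
      rw [Finset.mul_sum]
      refine Finset.sum_congr rfl (fun i _ => ?_)
      rw [pow_add, mul_inv, div_pow, one_pow]
      rw [one_div]
    have h4 : ∑ i ∈ Finset.range (m + 1 - k), ((1:ℝ)/2)^i ≤ 2 := sum_geometric_two_le _
    have h5 : ((2:ℝ)^k)⁻¹ ≤ c := h k (J.min'_mem hJ)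
    calc ∑ j ∈ J, ((2:ℝ)^j)⁻¹ ≤ ((2:ℝ)^k)⁻¹ * ∑ i ∈ Finset.range (m + 1 - k), ((1:ℝ)/2)^i := by
          rw [← h3, ← h2]; exact h1
      _ ≤ ((2:ℝ)^k)⁻¹ * 2 := by
          have : (0:ℝ) ≤ ((2:ℝ)^k)⁻¹ := by positivity
          nlinarith
      _ ≤ 2 * c := by nlinarith [h5]

set_option maxHeartbeats 1000000 in
lemma key_cover {d : ℕ} (hd : 2 ≤ d) (ξ : ℕ → EuclideanSpace ℝ (Fin d))
    (hξ : ∀ j, ‖ξ j‖ = 1) (x : EuclideanSpace ℝ (Fin d)) (R : ℝ) (hR : 0 < R)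
    (r : ℝ) (hr0 : 0 < r) (hrR : r < R) :
    (coverNumber (Metric.closedBall x R ∩ Kset ξ) r : ℝ) ≤ 100 * (R / r) := by
  classical
  have hd1 : 1 ≤ d := le_trans (by norm_num) hd
  have hRr : (1:ℝ) ≤ R / r := (one_le_div hr0).2 hrR.le
  set Pred : ℕ → Prop := fun j => ∃ t : ℝ, |t| ≤ (1:ℝ)/2^(j+2) ∧ pm ξ j t ∈ closedBall x R
    with hPred
  set t₀ : ℕ → ℝ := fun j => if h : Pred j then h.choose else 0 with ht₀def
  have ht₀ : ∀ j, Pred j → |t₀ j| ≤ (1:ℝ)/2^(j+2) ∧ pm ξ j (t₀ j) ∈ closedBall x R := by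
    intro j hj
    simp only [ht₀def, dif_pos hj]
    exact hj.choose_spec
  set M : ℕ := ⌈5/(2*r)⌉₊ with hM
  set J : Finset ℕ := (Finset.range M).filter (fun j => 2*r/5 ≤ ((2:ℝ)^j)⁻¹ ∧ Pred j) with hJdef
  set a : ℕ → ℝ := fun j => max (-((1:ℝ)/2^(j+2))) (t₀ j - 2*R) with hadef
  set b : ℕ → ℝ := fun j => min ((1:ℝ)/2^(j+2)) (t₀ j + 2*R) with hbdef
  set n : ℕ → ℕ := fun j => ⌊(b j - a j)/(r/2)⌋₊ with hndef
  set cov : ℕ → Finset (Set (EuclideanSpace ℝ (Fin d))) := fun j =>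
    (Finset.range (n j + 1)).image (fun i : ℕ => ball (pm ξ j (a j + i*(r/2))) (r/2))
    with hcovdef
  set 𝒰 : Finset (Set (EuclideanSpace ℝ (Fin d))) := insert (ball (0:EuclideanSpace ℝ (Fin d)) (r/2)) (J.biUnion cov) with h𝒰def
  -- facts about j ∈ J
  have hfacts : ∀ j ∈ J, ((n j : ℝ) ≤ (b j - a j)/(r/2)) ∧ b j - a j ≤ 2*((1:ℝ)/2^(j+2)) ∧
      b j - a j ≤ 4*R ∧ ((2:ℝ)^j)⁻¹ ≤ (4/3)*(‖x‖+R) ∧ ‖x‖ ≤ (5/4)*((2:ℝ)^j)⁻¹ + R ∧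
      (1:ℝ) ≤ (5/(2*r)) * ((2:ℝ)^j)⁻¹ := by
    intro j hj
    rw [hJdef, Finset.mem_filter] at hj
    obtain ⟨-, hcj, hPj⟩ := hj
    obtain ⟨ht0a, ht0b⟩ := ht₀ j hPj
    obtain ⟨ht0a1, ht0a2⟩ := abs_le.1 ht0a
    have hab1 : a j ≤ t₀ j := by
      rw [hadef]; exact max_le ht0a1 (by linarith)
    have hab2 : t₀ j ≤ b j := by
      rw [hbdef]; exact le_min ht0a2 (by linarith)
    have hab : a j ≤ b j := le_trans hab1 hab2
    have hba1 : b j - a j ≤ 2*((1:ℝ)/2^(j+2)) := by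
      have h1 : b j ≤ (1:ℝ)/2^(j+2) := by rw [hbdef]; exact min_le_left _ _
      have h2 : -((1:ℝ)/2^(j+2)) ≤ a j := by rw [hadef]; exact le_max_left _ _
      linarith
    have hba2 : b j - a j ≤ 4*R := by
      have h1 : b j ≤ t₀ j + 2*R := by rw [hbdef]; exact min_le_right _ _
      have h2 : t₀ j - 2*R ≤ a j := by rw [hadef]; exact le_max_right _ _
      linarith
    have hn1 : (n j : ℝ) ≤ (b j - a j)/(r/2) := by
      rw [hndef]
      exact Nat.floor_le (div_nonneg (by linarith) (by positivity))
    have hdxb : dist (pm ξ j (t₀ j)) x ≤ R := mem_closedBall.1 ht0b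
    have hnn := abs_le.1 (abs_norm_sub_norm_le (pm ξ j (t₀ j)) x)
    rw [← dist_eq_norm] at hnn
    obtain ⟨hnn1, hnn2⟩ := hnn
    have hge := norm_pm_ge hd1 ξ hξ j (t₀ j) ht0a
    have hle := norm_pm_le hd1 ξ hξ j (t₀ j) ht0a
    refine ⟨hn1, hba1, hba2, by linarith, by linarith, ?_⟩
    calc (1:ℝ) = (5/(2*r)) * (2*r/5) := by field_simp
      _ ≤ (5/(2*r)) * ((2:ℝ)^j)⁻¹ := by
          exact mul_le_mul_of_nonneg_left hcj (by positivity)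
  -- the cover covers
  have hcov : closedBall x R ∩ Kset ξ ⊆ ⋃₀ ↑𝒰 := by
    rintro y ⟨hyB, hyK⟩
    have hball0 : (ball (0:EuclideanSpace ℝ (Fin d)) (r/2)) ∈ 𝒰 := by
      rw [h𝒰def]; exact Finset.mem_insert_self _ _
    rcases hyK with hy0 | hyT
    · refine ⟨_, hball0, ?_⟩
      simp only [mem_singleton_iff] at hy0
      subst hy0
      exact mem_ball_self (by positivity)
    · obtain ⟨j, hjmem⟩ := mem_iUnion.1 hyT
      obtain ⟨t, ht, hty⟩ := (mem_Tseg_iff ξ j y).1 hjmem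
      by_cases hc : 2*r/5 ≤ ((2:ℝ)^j)⁻¹
      · -- j ∈ J
        have hPj : Pred j := ⟨t, ht, by rw [hty]; exact hyB⟩
        have hp2 : (0:ℝ) < (2:ℝ)^j := by positivity
        have h2r : (2:ℝ)^j ≤ 5/(2*r) := by
          rw [le_div_iff₀ (by positivity)]
          have h6 := mul_le_mul_of_nonneg_right hc hp2.le
          rw [inv_mul_cancel₀ (ne_of_gt hp2)] at h6
          linarith
        have hj2 : (j:ℝ) < (2:ℝ)^j := by exact_mod_cast (Nat.lt_two_pow_self (n := j))
        have hjM : j < M := by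
          have h7 : (j:ℝ) < (M:ℝ) := lt_of_lt_of_le (lt_of_lt_of_le hj2 h2r) (by
            rw [hM]; exact Nat.le_ceil _)
          exact_mod_cast h7
        have hjJ : j ∈ J := by
          rw [hJdef, Finset.mem_filter]
          exact ⟨Finset.mem_range.2 hjM, hc, hPj⟩
        obtain ⟨ht0a, ht0b⟩ := ht₀ j hPj
        have htt0 : |t - t₀ j| ≤ 2*R := by
          rw [← dist_pm ξ hξ]
          calc dist (pm ξ j t) (pm ξ j (t₀ j)) ≤ dist (pm ξ j t) x + dist x (pm ξ j (t₀ j)) :=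
                dist_triangle _ _ _
            _ ≤ R + R := by
                refine add_le_add ?_ ?_
                · rw [hty]; exact mem_closedBall.1 hyB
                · rw [dist_comm]; exact mem_closedBall.1 ht0b
            _ = 2*R := by ring
        obtain ⟨htt1, htt2⟩ := abs_le.1 htt0
        obtain ⟨hta, htb⟩ := abs_le.1 ht
        have hat : a j ≤ t := by rw [hadef]; exact max_le hta (by linarith)
        have htbj : t ≤ b j := by rw [hbdef]; exact le_min htb (by linarith)
        set i : ℕ := ⌊(t - a j)/(r/2)⌋₊ with hidef
        have hr2 : (0:ℝ) < r/2 := by positivity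
        have hi_le : i ≤ n j := by
          rw [hidef, hndef]
          exact Nat.floor_le_floor ((div_le_div_iff_of_pos_right hr2).2 (by linarith))
        have hfl1 : (i:ℝ) * (r/2) ≤ t - a j := by
          have h8 : (i:ℝ) ≤ (t - a j)/(r/2) :=
            Nat.floor_le (div_nonneg (by linarith) hr2.le)
          calc (i:ℝ) * (r/2) ≤ ((t - a j)/(r/2)) * (r/2) := by nlinarith
            _ = t - a j := by field_simp
        have hfl2 : t - a j < ((i:ℝ) + 1) * (r/2) := by
          have h9 : (t - a j)/(r/2) < (i:ℝ) + 1 := Nat.lt_floor_add_one _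
          calc t - a j = ((t - a j)/(r/2)) * (r/2) := by field_simp
            _ < ((i:ℝ) + 1) * (r/2) := by nlinarith
        have hdisty : dist y (pm ξ j (a j + (i:ℝ)*(r/2))) < r/2 := by
          rw [← hty, dist_pm ξ hξ, abs_lt]
          constructor <;> nlinarith
        refine ⟨ball (pm ξ j (a j + (i:ℝ)*(r/2))) (r/2), ?_, mem_ball.2 hdisty⟩
        rw [h𝒰def]
        refine Finset.mem_insert_of_mem (Finset.mem_biUnion.2 ⟨j, hjJ, ?_⟩)
        rw [hcovdef]
        exact Finset.mem_image.2 ⟨i, Finset.mem_range.2 (Nat.lt_succ_of_le hi_le), rfl⟩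
      · -- small segment: y in the central ball
        push_neg at hc
        have hnormy : ‖y‖ < r/2 := by
          have h10 := norm_pm_le hd1 ξ hξ j t ht
          rw [hty] at h10
          nlinarith
        exact ⟨_, hball0, by rw [mem_ball, dist_zero_right]; exact hnormy⟩
  -- all members are open with small diameter
  have hprop : ∀ U ∈ 𝒰, IsOpen U ∧ Metric.diam U ≤ r := by
    intro U hU
    rw [h𝒰def, Finset.mem_insert] at hU
    have hdb : ∀ z : EuclideanSpace ℝ (Fin d), Metric.diam (ball z (r/2)) ≤ r := by
      intro z
      have := Metric.diam_ball (x := z) (show (0:ℝ) ≤ r/2 by positivity)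
      linarith
    rcases hU with rfl | hU
    · exact ⟨isOpen_ball, hdb 0⟩
    · obtain ⟨j, hj, hUj⟩ := Finset.mem_biUnion.1 hU
      rw [hcovdef] at hUj
      obtain ⟨i, -, rfl⟩ := Finset.mem_image.1 hUj
      exact ⟨isOpen_ball, hdb _⟩
  -- card bound
  have hcN : coverNumber (closedBall x R ∩ Kset ξ) r ≤ 𝒰.card :=
    Nat.sInf_le ⟨𝒰, rfl, hprop, hcov⟩
  have hcard : (𝒰.card : ℝ) ≤ 1 + ∑ j ∈ J, ((n j : ℝ) + 1) := by
    have h1 : 𝒰.card ≤ (J.biUnion cov).card + 1 := by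
      rw [h𝒰def]; exact Finset.card_insert_le _ _
    have h2 : (J.biUnion cov).card ≤ ∑ j ∈ J, (cov j).card := Finset.card_biUnion_le
    have h3 : ∀ j ∈ J, (cov j).card ≤ n j + 1 := by
      intro j _
      rw [hcovdef]
      exact le_trans Finset.card_image_le (by simp)
    have h4 : 𝒰.card ≤ 1 + ∑ j ∈ J, (n j + 1) := by
      calc 𝒰.card ≤ (J.biUnion cov).card + 1 := h1
        _ ≤ (∑ j ∈ J, (cov j).card) + 1 := by omega
        _ ≤ (∑ j ∈ J, (n j + 1)) + 1 := by
            have := Finset.sum_le_sum h3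
            omega
        _ = 1 + ∑ j ∈ J, (n j + 1) := by omega
    calc (𝒰.card : ℝ) ≤ ((1 + ∑ j ∈ J, (n j + 1) : ℕ) : ℝ) := by exact_mod_cast h4
      _ = 1 + ∑ j ∈ J, ((n j : ℝ) + 1) := by push_cast; ring
  -- final arithmetic
  have hfin : (1:ℝ) + ∑ j ∈ J, ((n j : ℝ) + 1) ≤ 100 * (R/r) := by
    by_cases hx2R : ‖x‖ ≤ 2*R
    · have hterm : ∀ j ∈ J, ((n j:ℝ)+1) ≤ (7/(2*r)) * ((2:ℝ)^j)⁻¹ := by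
        intro j hj
        obtain ⟨hn1, hba1, hba2, hub, hlbx, h1le⟩ := hfacts j hj
        have e1 : (b j - a j)/(r/2) ≤ (2*((1:ℝ)/2^(j+2)))/(r/2) :=
          (div_le_div_iff_of_pos_right (by positivity)).2 hba1
        have e2 : (2*((1:ℝ)/2^(j+2)))/(r/2) = (1/r) * ((2:ℝ)^j)⁻¹ := by
          rw [pow_add]; field_simp
        have e3 : (1/r) * ((2:ℝ)^j)⁻¹ + (5/(2*r)) * ((2:ℝ)^j)⁻¹
            = (7/(2*r)) * ((2:ℝ)^j)⁻¹ := by ring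
        linarith
      have hgeo : ∑ j ∈ J, ((2:ℝ)^j)⁻¹ ≤ 2 * (4*R) := by
        refine sum_inv_pow_le J (4*R) (by positivity) (fun j hj => ?_)
        obtain ⟨-, -, -, hub, -, -⟩ := hfacts j hj
        linarith
      have hsum : ∑ j ∈ J, ((n j:ℝ)+1) ≤ 28 * (R/r) := by
        calc ∑ j ∈ J, ((n j:ℝ)+1) ≤ ∑ j ∈ J, (7/(2*r)) * ((2:ℝ)^j)⁻¹ :=
              Finset.sum_le_sum hterm
          _ = (7/(2*r)) * ∑ j ∈ J, ((2:ℝ)^j)⁻¹ := by rw [Finset.mul_sum]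
          _ ≤ (7/(2*r)) * (8*R) := by
              have h11 : (0:ℝ) ≤ 7/(2*r) := by positivity
              nlinarith
          _ = 28 * (R/r) := by field_simp; ring
      linarith
    · push_neg at hx2R
      have hx0 : (0:ℝ) < ‖x‖ := lt_trans (by positivity) hx2R
      have hub2 : ∀ j ∈ J, ((2:ℝ)^j)⁻¹ ≤ 2*‖x‖ := by
        intro j hj
        obtain ⟨-, -, -, hub, -, -⟩ := hfacts j hj
        linarith
      have hlb2 : ∀ j ∈ J, (2/5)*‖x‖ ≤ ((2:ℝ)^j)⁻¹ := by
        intro j hj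
        obtain ⟨-, -, -, -, hlbx, -⟩ := hfacts j hj
        linarith
      have hgeo : ∑ j ∈ J, ((2:ℝ)^j)⁻¹ ≤ 4*‖x‖ := by
        have := sum_inv_pow_le J (2*‖x‖) (by positivity) hub2
        linarith
      have hJcard : (J.card : ℝ) ≤ 10 := by
        have h12 : (J.card : ℝ) = ∑ j ∈ J, (1:ℝ) := by simp
        have h13 : ∑ j ∈ J, (1:ℝ) ≤ ∑ j ∈ J, (5/(2*‖x‖)) * ((2:ℝ)^j)⁻¹ := by
          refine Finset.sum_le_sum (fun j hj => ?_)
          have h14 := hlb2 j hj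
          calc (1:ℝ) = (5/(2*‖x‖)) * ((2/5)*‖x‖) := by field_simp
            _ ≤ (5/(2*‖x‖)) * ((2:ℝ)^j)⁻¹ := mul_le_mul_of_nonneg_left h14 (by positivity)
        have h15 : ∑ j ∈ J, (5/(2*‖x‖)) * ((2:ℝ)^j)⁻¹
            = (5/(2*‖x‖)) * ∑ j ∈ J, ((2:ℝ)^j)⁻¹ := by rw [Finset.mul_sum]
        have h16 : (5/(2*‖x‖)) * ∑ j ∈ J, ((2:ℝ)^j)⁻¹ ≤ (5/(2*‖x‖)) * (4*‖x‖) :=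
          mul_le_mul_of_nonneg_left hgeo (by positivity)
        have h17 : (5/(2*‖x‖)) * (4*‖x‖) = 10 := by field_simp; ring
        linarith [h12 ▸ (le_trans h13 (h15 ▸ (h17 ▸ h16)))]
      have hterm : ∀ j ∈ J, ((n j:ℝ)+1) ≤ 9 * (R/r) := by
        intro j hj
        obtain ⟨hn1, -, hba2, -, -, -⟩ := hfacts j hj
        have e1 : (b j - a j)/(r/2) ≤ (4*R)/(r/2) :=
          (div_le_div_iff_of_pos_right (by positivity)).2 hba2
        have e2 : (4*R)/(r/2) = 8*(R/r) := by field_simp; ring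
        linarith
      have hsum : ∑ j ∈ J, ((n j:ℝ)+1) ≤ 90 * (R/r) := by
        calc ∑ j ∈ J, ((n j:ℝ)+1) ≤ ∑ j ∈ J, 9*(R/r) := Finset.sum_le_sum hterm
          _ = (J.card : ℝ) * (9*(R/r)) := by rw [Finset.sum_const, nsmul_eq_mul]
          _ ≤ 10 * (9*(R/r)) := by
              have h18 : (0:ℝ) ≤ 9*(R/r) := by positivity
              nlinarith
          _ = 90 * (R/r) := by ring
      linarith
  calc (coverNumber (closedBall x R ∩ Kset ξ) r : ℝ) ≤ (𝒰.card : ℝ) := by exact_mod_cast hcN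
    _ ≤ 1 + ∑ j ∈ J, ((n j : ℝ) + 1) := hcard
    _ ≤ 100 * (R/r) := hfin

/-- For any sequence of unit vectors `ξ_j` in `ℝ^d` (`d ≥ 2`), there is `C > 0`
with `N(B(x,R) ∩ K, r) ≤ C·R/r` for all `x ∈ K` and `0 < r < R`; in particular
`dim_A K ≤ 1`, where `K = {0} ∪ ⋃_j T_j`. -/
theorem Kset_coverNumber_le (d : ℕ) (hd : 2 ≤ d) (ξ : ℕ → EuclideanSpace ℝ (Fin d))
    (hξ : ∀ j, ‖ξ j‖ = 1) :
    (∃ C > (0 : ℝ), ∀ x ∈ Kset ξ, ∀ R > (0 : ℝ), ∀ r ∈ Set.Ioo 0 R,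
      (coverNumber (Metric.closedBall x R ∩ Kset ξ) r : ℝ) ≤ C * (R / r)) ∧
    assouadDim (Kset ξ) ≤ 1 := by
  constructor
  · exact ⟨100, by norm_num, fun x _ R hR r hr => key_cover hd ξ hξ x R hR r hr.1 hr.2⟩
  · refine csInf_le ⟨0, fun σ hσ => hσ.1⟩ ⟨zero_le_one, 100, by norm_num, fun x _ R hR r hr => ?_⟩
    rw [Real.rpow_one]
    exact key_cover hd ξ hξ x R hR r hr.1 hr.2
end

section
/- Let d ≥ 2 be an integer and let (ξ_j)_{j≥0} be any sequence of unit vectors in ℝ^d. For the set K = {0} ∪ ⋃_{j≥0} T_j there exists a constant C > 0 such that N(B(0,R) ∩ K, r) ≤ C·R/r for all 0 < r < R, where B(0,R) is the closed ball of radius R centred at the origin. -/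
open Metric Set

private lemma coverNumber_le_card' {X : Type*} [MetricSpace X] {E : Set X} {r : ℝ}
    (𝒰 : Finset (Set X)) (h1 : ∀ U ∈ 𝒰, IsOpen U ∧ Metric.diam U ≤ r)
    (h2 : E ⊆ ⋃₀ ↑𝒰) : coverNumber E r ≤ 𝒰.card :=
  Nat.sInf_le ⟨𝒰, rfl, h1, h2⟩

private lemma norm_stdE₁' {d : ℕ} (hd : 1 ≤ d) : ‖stdE₁ d‖ = 1 := by
  have h : stdE₁ d = EuclideanSpace.single (⟨0, by omega⟩ : Fin d) (1:ℝ) := by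
    ext i
    simp [stdE₁, EuclideanSpace.single, Fin.ext_iff, Pi.single_apply]
  rw [h, EuclideanSpace.norm_single]; norm_num

set_option maxHeartbeats 2000000 in
/-- For any sequence of unit vectors `ξ_j` in `ℝ^d` (`d ≥ 2`), there is `C > 0`
with `N(B(0,R) ∩ K, r) ≤ C·R/r` for all `0 < r < R`, where `K = {0} ∪ ⋃_j T_j`. -/
theorem Kset_coverNumber_at_origin_le (d : ℕ) (hd : 2 ≤ d)
    (ξ : ℕ → EuclideanSpace ℝ (Fin d)) (hξ : ∀ j, ‖ξ j‖ = 1) :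
    ∃ C > (0 : ℝ), ∀ R > (0 : ℝ), ∀ r ∈ Set.Ioo 0 R,
      (coverNumber (Metric.closedBall (0 : EuclideanSpace ℝ (Fin d)) R ∩ Kset ξ) r : ℝ)
        ≤ C * (R / r) := by
  classical
  have he₁ : ‖stdE₁ d‖ = 1 := norm_stdE₁' (by omega)
  refine ⟨100, by norm_num, ?_⟩
  rintro R hR r ⟨hr, hrR⟩
  have hr2 : (0:ℝ) < r/2 := by linarith
  have hex : ∃ j : ℕ, (1:ℝ) ≤ 2^j * (2*R) := by
    obtain ⟨n, hn⟩ := pow_unbounded_of_one_lt (1/(2*R)) (by norm_num : (1:ℝ) < 2)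
    refine ⟨n, ?_⟩
    rw [div_lt_iff₀ (by linarith)] at hn
    linarith [mul_comm (2*R) ((2:ℝ)^n), hn]
  set j₀ := Nat.find hex with hj₀def
  have hj₀ : (1:ℝ) ≤ 2^j₀ * (2*R) := Nat.find_spec hex
  set M := ⌈8*R/r⌉₊ with hMdef
  have hMge : 8*R/r ≤ (2:ℝ)^M := by
    calc 8*R/r ≤ (M:ℝ) := Nat.le_ceil _
    _ ≤ 2^M := by exact_mod_cast (Nat.lt_two_pow_self (n := M)).le
  have hMle : (M:ℝ) ≤ 8*R/r + 1 := (Nat.ceil_lt_add_one (by positivity)).le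
  have hj₀min : ∀ j, j < j₀ → (2:ℝ)^j * (2*R) < 1 := fun j hj =>
    not_le.1 (Nat.find_min hex hj)
  clear hj₀def hMdef
  clear_value j₀ M
  set c : ℕ → ℕ → EuclideanSpace ℝ (Fin d) :=
    fun j k => (-((1:ℝ)/2^(j+2)) + k*(r/2)) • ξ j + ((1:ℝ)/2^j) • stdE₁ d with hcdef
  set N : ℕ → ℕ := fun j => ⌊(1:ℝ)/2^j/r⌋₊ + 1 with hNdef
  set S : Finset ((_ : ℕ) × ℕ) :=
    (Finset.Ico j₀ (j₀+M)).sigma (fun j => Finset.range (N j)) with hSdef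
  set 𝒰 : Finset (Set (EuclideanSpace ℝ (Fin d))) :=
    insert (Metric.ball (0:EuclideanSpace ℝ (Fin d)) (r/2))
      (S.image (fun p => Metric.ball (c p.1 p.2) (r/2))) with hUdef
  clear_value c N S 𝒰
  have hprops : ∀ U ∈ 𝒰, IsOpen U ∧ Metric.diam U ≤ r := by
    intro U hU
    rw [hUdef, Finset.mem_insert] at hU
    have hball : ∃ x, U = Metric.ball x (r/2) := by
      rcases hU with h | h
      · exact ⟨0, h⟩
      · obtain ⟨p, _, hp⟩ := Finset.mem_image.1 h
        exact ⟨_, hp.symm⟩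
    obtain ⟨x, rfl⟩ := hball
    refine ⟨isOpen_ball, ?_⟩
    calc Metric.diam (Metric.ball x (r/2)) ≤ 2 * (r/2) := Metric.diam_ball hr2.le
    _ = r := by ring
  have hcover : Metric.closedBall (0 : EuclideanSpace ℝ (Fin d)) R ∩ Kset ξ ⊆ ⋃₀ ↑𝒰 := by
    rintro x ⟨hxB, hxK⟩
    rw [Set.mem_sUnion]
    simp only [Kset, Set.mem_union, Set.mem_singleton_iff, Set.mem_iUnion] at hxK
    have hU0 : Metric.ball (0:EuclideanSpace ℝ (Fin d)) (r/2) ∈ (↑𝒰 : Set (Set _)) := by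
      rw [hUdef]; exact Finset.mem_coe.2 (Finset.mem_insert_self _ _)
    rcases hxK with rfl | ⟨j, hj⟩
    · exact ⟨_, hU0, by simpa [Metric.mem_ball] using hr2⟩
    simp only [Tseg, Set.mem_image] at hj
    obtain ⟨t, ht, rfl⟩ := hj
    have h2jpos : (0:ℝ) < 2^j := by positivity
    have hsplit : (1:ℝ)/2^(j+2) = (1/2^j)/4 := by
      rw [pow_add]; ring
    have hnt : ‖t • ξ j‖ ≤ (1/2^j)/4 := by
      have habs : |t| ≤ (1:ℝ)/2^(j+2) := abs_le.2 ⟨ht.1, ht.2⟩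
      rw [hsplit] at habs
      rw [norm_smul, hξ j, mul_one, Real.norm_eq_abs]
      exact habs
    have hne : ‖((1:ℝ)/2^j) • stdE₁ d‖ = 1/2^j := by
      rw [norm_smul, he₁, mul_one, Real.norm_eq_abs]
      exact abs_of_pos (by positivity)
    rcases lt_or_ge j j₀ with hjlt | hjge
    · exfalso
      have h2R : (2:ℝ)^j * (2*R) < 1 := hj₀min j hjlt
      have h2R' : 2*R < 1/2^j := by
        rw [lt_div_iff₀ h2jpos]
        linarith [mul_comm ((2:ℝ)^j) (2*R), h2R]
      have hnx : ‖t • ξ j + ((1:ℝ)/2^j) • stdE₁ d‖ ≤ R := by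
        simpa [dist_zero_right] using hxB
      have h3 : ‖((1:ℝ)/2^j) • stdE₁ d‖ ≤
          ‖t • ξ j‖ + ‖t • ξ j + ((1:ℝ)/2^j) • stdE₁ d‖ := by
        have h := norm_add_le (-(t • ξ j)) (t • ξ j + ((1:ℝ)/2^j) • stdE₁ d)
        simpa [neg_add_cancel_left] using h
      rw [hne] at h3
      linarith
    rcases lt_or_ge j (j₀ + M) with hjlt2 | hjge2
    · -- main case : segment balls
      set k := ⌊(t + (1:ℝ)/2^(j+2))/(r/2)⌋₊ with hkdef
      have hu0 : (0:ℝ) ≤ t + 1/2^(j+2) := by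
        have := ht.1; linarith
      have hk1 : (k:ℝ)*(r/2) ≤ t + 1/2^(j+2) := by
        have h := Nat.floor_le (div_nonneg hu0 hr2.le)
        rw [← hkdef] at h
        calc (k:ℝ)*(r/2) ≤ ((t + (1:ℝ)/2^(j+2))/(r/2))*(r/2) := by
              apply mul_le_mul_of_nonneg_right h hr2.le
        _ = t + 1/2^(j+2) := div_mul_cancel₀ _ hr2.ne'
      have hk2 : t + (1:ℝ)/2^(j+2) < (k:ℝ)*(r/2) + r/2 := by
        have h := Nat.lt_floor_add_one ((t + (1:ℝ)/2^(j+2))/(r/2))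
        rw [← hkdef] at h
        rw [div_lt_iff₀ hr2] at h
        have hexp : ((k:ℝ)+1)*(r/2) = (k:ℝ)*(r/2) + r/2 := by ring
        linarith
      have hkN : k < N j := by
        have hle2 : (t + (1:ℝ)/2^(j+2))/(r/2) ≤ ((1:ℝ)/2^j)/r := by
          rw [div_le_div_iff₀ hr2 hr, hsplit]
          have h2 := ht.2
          rw [hsplit] at h2
          nlinarith [mul_le_mul_of_nonneg_right h2 hr.le]
        have hff := Nat.floor_le_floor hle2
        rw [← hkdef] at hff
        have hNj : N j = ⌊(1:ℝ)/2^j/r⌋₊ + 1 := by rw [hNdef]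
        omega
      clear hkdef
      clear_value k
      have hmemS : (⟨j, k⟩ : (_ : ℕ) × ℕ) ∈ S := by
        rw [hSdef]
        exact Finset.mem_sigma.2 ⟨Finset.mem_Ico.2 ⟨hjge, hjlt2⟩, Finset.mem_range.2 hkN⟩
      refine ⟨Metric.ball (c j k) (r/2), ?_, ?_⟩
      · rw [hUdef]
        exact Finset.mem_coe.2 (Finset.mem_insert_of_mem
          (Finset.mem_image.2 ⟨⟨j, k⟩, hmemS, rfl⟩))
      · rw [Metric.mem_ball, dist_eq_norm]
        have hveq : (t • ξ j + ((1:ℝ)/2^j) • stdE₁ d) - c j k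
            = (t - (-((1:ℝ)/2^(j+2)) + k*(r/2))) • ξ j := by
          rw [hcdef]; module
        rw [hveq, norm_smul, hξ j, mul_one, Real.norm_eq_abs]
        rw [abs_of_nonneg (by linarith : (0:ℝ) ≤ t - (-((1:ℝ)/2^(j+2)) + k*(r/2)))]
        nlinarith
    · -- tail : in the central ball
      refine ⟨_, hU0, ?_⟩
      have hpow : (1:ℝ)/2^j ≤ r/4 := by
        have h1 : (2:ℝ)^(j₀+M) ≤ 2^j := pow_le_pow_right₀ one_le_two hjge2
        have hA : 1/(2*R) ≤ (2:ℝ)^j₀ := by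
          rw [div_le_iff₀ (by linarith)]; linarith
        have h2 : (4:ℝ)/r ≤ 2^(j₀+M) := by
          rw [pow_add]
          calc (4:ℝ)/r = (1/(2*R)) * (8*R/r) := by field_simp; ring
          _ ≤ 2^j₀ * 2^M := by
            apply mul_le_mul hA hMge (by positivity) (by positivity)
        have h3 : (4:ℝ)/r ≤ 2^j := le_trans h2 h1
        rw [div_le_iff₀ hr] at h3
        rw [div_le_div_iff₀ h2jpos (by norm_num : (0:ℝ) < 4)]
        linarith [mul_comm r ((2:ℝ)^j), h3]
      rw [Metric.mem_ball, dist_zero_right]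
      calc ‖t • ξ j + ((1:ℝ)/2^j) • stdE₁ d‖
          ≤ ‖t • ξ j‖ + ‖((1:ℝ)/2^j) • stdE₁ d‖ := norm_add_le _ _
      _ ≤ (1/2^j)/4 + 1/2^j := by rw [hne]; linarith
      _ ≤ (r/4)/4 + r/4 := by linarith [hpow]
      _ < r/2 := by linarith
  have hcard1 : 𝒰.card ≤ 1 + ∑ j ∈ Finset.Ico j₀ (j₀+M), N j := by
    calc 𝒰.card ≤ (S.image (fun p => Metric.ball (c p.1 p.2) (r/2))).card + 1 := by
          rw [hUdef]; exact Finset.card_insert_le _ _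
    _ ≤ S.card + 1 := by gcongr; exact Finset.card_image_le
    _ = (∑ j ∈ Finset.Ico j₀ (j₀+M), N j) + 1 := by
          rw [hSdef, Finset.card_sigma]; simp
    _ = 1 + ∑ j ∈ Finset.Ico j₀ (j₀+M), N j := by ring
  have hgeo : ∑ j ∈ Finset.Ico j₀ (j₀+M), (1:ℝ)/2^j ≤ 4*R := by
    have hpow : ∀ j : ℕ, (1:ℝ)/2^j = (1/2:ℝ)^j := fun j => by
      rw [div_pow, one_pow]
    have h12 : ((1:ℝ)/2)^j₀ ≤ 2*R := by
      rw [← hpow, div_le_iff₀ (by positivity)]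
      linarith [mul_comm (2*R) ((2:ℝ)^j₀), hj₀]
    calc ∑ j ∈ Finset.Ico j₀ (j₀+M), (1:ℝ)/2^j
        = ∑ j ∈ Finset.Ico j₀ (j₀+M), ((1:ℝ)/2)^j := by
          exact Finset.sum_congr rfl (fun j _ => hpow j)
    _ = (((1:ℝ)/2)^(j₀+M) - (1/2)^j₀)/((1/2) - 1) :=
          geom_sum_Ico (by norm_num) (Nat.le_add_right _ _)
    _ = 2*(1/2:ℝ)^j₀ - 2*(1/2)^(j₀+M) := by ring
    _ ≤ 2*(1/2:ℝ)^j₀ := by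
          have : (0:ℝ) ≤ (1/2:ℝ)^(j₀+M) := by positivity
          linarith
    _ ≤ 4*R := by linarith
  have hsumN : ((∑ j ∈ Finset.Ico j₀ (j₀+M), N j : ℕ) : ℝ)
      ≤ (4*R)/r + M := by
    push_cast [hNdef]
    have h1 : ∀ j ∈ Finset.Ico j₀ (j₀+M),
        ((⌊(1:ℝ)/2^j/r⌋₊ : ℝ) + 1) ≤ (1:ℝ)/2^j/r + 1 := by
      intro j _
      have := Nat.floor_le (show (0:ℝ) ≤ (1:ℝ)/2^j/r by positivity)
      linarith
    calc ∑ j ∈ Finset.Ico j₀ (j₀+M), ((⌊(1:ℝ)/2^j/r⌋₊ : ℝ) + 1)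
        ≤ ∑ j ∈ Finset.Ico j₀ (j₀+M), ((1:ℝ)/2^j/r + 1) := Finset.sum_le_sum h1
    _ = (∑ j ∈ Finset.Ico j₀ (j₀+M), (1:ℝ)/2^j)/r + M := by
          rw [Finset.sum_add_distrib, ← Finset.sum_div, Finset.sum_const, Nat.card_Ico,
            Nat.add_sub_cancel_left, nsmul_eq_mul, mul_one]
    _ ≤ (4*R)/r + M := add_le_add_left ((div_le_div_iff_of_pos_right hr).2 hgeo) _
  have hX : 1 ≤ R/r := by
    rw [le_div_iff₀ hr]; linarith
  have hle := coverNumber_le_card' 𝒰 hprops hcover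
  have hfin : ((1 + ∑ j ∈ Finset.Ico j₀ (j₀+M), N j : ℕ) : ℝ) ≤ 100 * (R/r) := by
    push_cast
    have h4 : (4:ℝ)*R/r = 4*(R/r) := by ring
    have h8 : (8:ℝ)*R/r = 8*(R/r) := by ring
    have := hsumN
    push_cast at this
    rw [h4] at this
    rw [h8] at hMle
    linarith
  calc ((coverNumber (Metric.closedBall (0 : EuclideanSpace ℝ (Fin d)) R ∩ Kset ξ) r : ℕ) : ℝ)
      ≤ ((1 + ∑ j ∈ Finset.Ico j₀ (j₀+M), N j : ℕ) : ℝ) := by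
        exact_mod_cast le_trans hle hcard1
  _ ≤ 100 * (R/r) := hfin
end

section
/- Let d ≥ 2 and 1 ≤ m ≤ d be integers and let (ξ_j)_{j≥0} be a sequence of m-tuples of unit vectors in ℝ^d whose set of terms {ξ_j : j ≥ 0} is dense in the m-fold product (S^{d−1})^m. Then the set K = {0} ∪ ⋃_{j≥0} D_j contains a (k,ε,{e_1,…,e_m})-AP for every integer k ≥ 3, every ε ∈ (0,1) and every linearly independent family {e_1,…,e_m} ∈ B^d_m. -/
open Metric Set

/-- If the `m`-tuples of unit vectors `ξ_j` are dense in `(S^{d-1})^m`, then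
`K = {0} ∪ ⋃_j D_j` contains a `(k,ε,{e₁,…,eₘ})`-AP for every `k ≥ 3`, every `ε ∈ (0,1)`
and every linearly independent family `{e₁,…,eₘ}`. -/
theorem KsetD_contains_APs (d m : ℕ) (hd : 2 ≤ d) (hm : 1 ≤ m) (hmd : m ≤ d)
    (ξ : ℕ → Fin m → EuclideanSpace ℝ (Fin d)) (hξ : ∀ j i, ‖ξ j i‖ = 1)
    (hdense : {u : Fin m → EuclideanSpace ℝ (Fin d) | ∀ i, ‖u i‖ = 1} ⊆
      closure (Set.range ξ)) :
    ∀ k : ℕ, 3 ≤ k → ∀ ε ∈ Set.Ioo (0 : ℝ) 1,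
      ∀ e : Fin m → EuclideanSpace ℝ (Fin d), LinearIndependent ℝ e →
        ∃ Q ⊆ KsetD m ξ, IsAP m k ε e Q := by
  intro k hk ε hε e he
  obtain ⟨hε0, hε1⟩ := hε
  have hk3 : (3:ℝ) ≤ (k:ℝ) := by exact_mod_cast hk
  set κ : ℝ := (k:ℝ) - 1 with hκdef
  have hκ2 : (2:ℝ) ≤ κ := by simp only [hκdef]; linarith
  have hκpos : 0 < κ := by linarith
  have hne : ∀ i, e i ≠ 0 := fun i => he.ne_zero i
  have hnorm_pos : ∀ i, 0 < ‖e i‖ := fun i => norm_pos_iff.mpr (hne i)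
  set u : Fin m → EuclideanSpace ℝ (Fin d) := fun i => ‖e i‖⁻¹ • e i with hudef
  have hunorm : ∀ i, ‖u i‖ = 1 := by
    intro i
    simp only [hudef, norm_smul, norm_inv, norm_norm]
    exact inv_mul_cancel₀ (ne_of_gt (hnorm_pos i))
  have he_smul : ∀ i, e i = ‖e i‖ • u i := by
    intro i
    simp only [hudef, smul_smul, mul_inv_cancel₀ (ne_of_gt (hnorm_pos i)), one_smul]
  have hu_li : LinearIndependent ℝ u := by
    have h := he.units_smul (fun i => Units.mk0 (‖e i‖⁻¹) (inv_ne_zero (ne_of_gt (hnorm_pos i))))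
    convert h using 1
    funext i
    rfl
  have hu_cl : u ∈ closure (Set.range ξ) := hdense (fun i => hunorm i)
  set M : ℝ := ∑ i, ‖e i‖ with hMdef
  have hMi : ∀ i, ‖e i‖ ≤ M :=
    fun i => Finset.single_le_sum (fun i _ => norm_nonneg (e i)) (Finset.mem_univ i)
  have hMpos : 0 < M := lt_of_lt_of_le (hnorm_pos ⟨0, hm⟩) (hMi _)
  obtain ⟨δ₀, hδ₀pos, hδ₀⟩ := Metric.isOpen_iff.mp
    (isOpen_setOf_linearIndependent (𝕜 := ℝ) (E := EuclideanSpace ℝ (Fin d))) u hu_li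
  set δ : ℝ := min δ₀ (2 * ε / (κ * M)) with hδdef
  have hδpos : 0 < δ := lt_min hδ₀pos (by positivity)
  obtain ⟨b, hbmem, hbdist⟩ := Metric.mem_closure_iff.mp hu_cl δ hδpos
  obtain ⟨j, rfl⟩ := hbmem
  have hξli : LinearIndependent ℝ (ξ j) := by
    refine hδ₀ ?_
    rw [Metric.mem_ball, dist_comm]
    exact lt_of_lt_of_le hbdist (min_le_left _ _)
  have hξdist : ∀ i, ‖u i - ξ j i‖ ≤ 2 * ε / (κ * M) := by
    intro i
    refine le_trans ?_ (le_of_lt (lt_of_lt_of_le hbdist (min_le_right _ _)))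
    rw [← dist_eq_norm]
    exact dist_le_pi_dist u (ξ j) i
  have hm' : (0:ℝ) < (m:ℝ) := by exact_mod_cast hm
  set r : ℝ := 1 / ((m:ℝ) * 2 ^ (j + 2)) with hrdef
  have hrpos : 0 < r := div_pos one_pos (mul_pos hm' (by positivity))
  set Δ : ℝ := 2 * r / (κ * M) with hΔdef
  have hΔpos : 0 < Δ := by positivity
  set c : Fin k → ℝ := fun x => ((x : ℕ) : ℝ) - κ / 2 with hcdef
  have hcabs : ∀ x : Fin k, |c x| ≤ κ / 2 := by
    intro x
    rw [abs_le]
    have h1 : (0:ℝ) ≤ ((x : ℕ) : ℝ) := Nat.cast_nonneg _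
    have h2 : ((x : ℕ) : ℝ) ≤ κ := by
      have hint : ((x : ℕ) : ℝ) + 1 ≤ (k : ℝ) := by exact_mod_cast x.2
      simp only [hκdef]; linarith
    constructor <;> simp only [hcdef] <;> linarith
  have hc_inj : ∀ x y : Fin k, c x = c y → x = y := by
    intro x y hxy
    simp only [hcdef, sub_left_inj] at hxy
    exact Fin.ext (Nat.cast_injective hxy)
  set t0 : EuclideanSpace ℝ (Fin d) :=
    ((1:ℝ) / 2 ^ j) • stdE₁ d - Δ • ∑ i, (κ / 2) • e i with ht0def
  set p : (Fin m → Fin k) → EuclideanSpace ℝ (Fin d) :=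
    fun x => t0 + Δ • ∑ i, ((x i : ℕ) : ℝ) • e i with hpdef
  set q : (Fin m → Fin k) → EuclideanSpace ℝ (Fin d) :=
    fun x => (∑ i, (c (x i) * Δ * ‖e i‖) • ξ j i) + ((1:ℝ) / 2 ^ j) • stdE₁ d with hqdef
  have hp_eq : ∀ x, p x = ((1:ℝ) / 2 ^ j) • stdE₁ d + Δ • ∑ i, c (x i) • e i := by
    intro x
    simp only [hpdef, ht0def, hcdef, sub_smul, Finset.sum_sub_distrib, smul_sub]
    abel
  have hrepr : ∀ x, p x - q x = ∑ i, (c (x i) * Δ) • (e i - ‖e i‖ • ξ j i) := by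
    intro x
    rw [hp_eq]
    simp only [hqdef, smul_sub, Finset.sum_sub_distrib, Finset.smul_sum, smul_smul, mul_comm Δ]
    abel
  have hdiff : ∀ x, ‖p x - q x‖ ≤ ε * Δ := by
    intro x
    calc ‖p x - q x‖ ≤ ∑ i, (|c (x i)| * Δ) * (‖e i‖ * ‖u i - ξ j i‖) := by
          rw [hrepr]
          refine le_trans (norm_sum_le _ _) (Finset.sum_le_sum fun i _ => le_of_eq ?_)
          rw [norm_smul]
          have hterm : e i - ‖e i‖ • ξ j i = ‖e i‖ • (u i - ξ j i) := by
            rw [smul_sub, ← he_smul i]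
          rw [hterm, norm_smul, norm_norm, Real.norm_eq_abs, abs_mul, abs_of_pos hΔpos]
      _ ≤ ∑ i, (κ / 2 * Δ) * (‖e i‖ * (2 * ε / (κ * M))) := by
          refine Finset.sum_le_sum fun i _ => ?_
          refine mul_le_mul (by exact mul_le_mul_of_nonneg_right (hcabs _) hΔpos.le)
            (mul_le_mul_of_nonneg_left (hξdist i) (norm_nonneg _)) ?_ ?_
          · positivity
          · positivity
      _ = (κ / 2 * Δ * (2 * ε / (κ * M))) * M := by
          rw [show (∑ i, (κ / 2 * Δ) * (‖e i‖ * (2 * ε / (κ * M))))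
              = ∑ i, (κ / 2 * Δ * (2 * ε / (κ * M))) * ‖e i‖ from
            Finset.sum_congr rfl fun i _ => by ring]
          rw [← Finset.mul_sum, ← hMdef]
      _ = ε * Δ := by
          field_simp
  have hq_inj : Function.Injective q := by
    intro x y hxy
    have h1 : ∑ i, ((c (x i) - c (y i)) * (Δ * ‖e i‖)) • ξ j i = 0 := by
      have h2 : ∑ i, (c (x i) * Δ * ‖e i‖) • ξ j i = ∑ i, (c (y i) * Δ * ‖e i‖) • ξ j i := by
        have := hxy
        simp only [hqdef, add_left_inj] at this
        exact this
      rw [← sub_eq_zero, ← Finset.sum_sub_distrib] at h2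
      rw [← h2]
      refine Finset.sum_congr rfl fun i _ => ?_
      rw [← sub_smul]
      congr 1
      ring
    have hco := Fintype.linearIndependent_iff.mp hξli _ h1
    funext i
    have h3 := hco i
    have h4 : Δ * ‖e i‖ ≠ 0 := ne_of_gt (mul_pos hΔpos (hnorm_pos i))
    rcases mul_eq_zero.mp h3 with h5 | h5
    · exact hc_inj _ _ (sub_eq_zero.mp h5)
    · exact absurd h5 h4
  have hp_inj : Function.Injective p := by
    intro x y hxy
    have h2 : Δ • ∑ i, ((x i : ℕ) : ℝ) • e i = Δ • ∑ i, ((y i : ℕ) : ℝ) • e i := by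
      simp only [hpdef, add_right_inj] at hxy
      exact hxy
    have h2' : ∑ i, ((x i : ℕ) : ℝ) • e i = ∑ i, ((y i : ℕ) : ℝ) • e i :=
      smul_right_injective _ (ne_of_gt hΔpos) h2
    have h1 : ∑ i, (((x i : ℕ) : ℝ) - ((y i : ℕ) : ℝ)) • e i = 0 := by
      rw [← sub_eq_zero, ← Finset.sum_sub_distrib] at h2'
      rw [← h2']
      exact Finset.sum_congr rfl fun i _ => sub_smul _ _ _
    have hco := Fintype.linearIndependent_iff.mp he _ h1
    funext i
    have h3 := sub_eq_zero.mp (hco i)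
    exact Fin.ext (Nat.cast_injective h3)
  set Q : Set (EuclideanSpace ℝ (Fin d)) := Set.range q with hQdef
  have hQsub : Q ⊆ KsetD m ξ := by
    rintro _ ⟨x, rfl⟩
    refine Set.mem_union_right _ (Set.mem_iUnion.mpr ⟨j, ?_⟩)
    refine ⟨fun i => c (x i) * Δ * ‖e i‖, fun i => ?_, rfl⟩
    have hb : |c (x i) * Δ * ‖e i‖| ≤ 1 / ((m:ℝ) * 2 ^ (j + 2)) := by
      have habs : |c (x i) * Δ * ‖e i‖| = |c (x i)| * Δ * ‖e i‖ := by
        rw [abs_mul, abs_mul, abs_of_pos hΔpos, abs_of_nonneg (norm_nonneg _)]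
      rw [habs, ← hrdef]
      have hstep : |c (x i)| * Δ * ‖e i‖ ≤ (κ / 2) * Δ * M := by
        have h1 : |c (x i)| * Δ ≤ (κ / 2) * Δ :=
          mul_le_mul_of_nonneg_right (hcabs _) hΔpos.le
        have h2 : |c (x i)| * Δ * ‖e i‖ ≤ (κ / 2) * Δ * ‖e i‖ :=
          mul_le_mul_of_nonneg_right h1 (norm_nonneg _)
        refine h2.trans (mul_le_mul_of_nonneg_left (hMi i) (by positivity))
      refine hstep.trans (le_of_eq ?_)
      rw [hΔdef]
      field_simp
    rw [Set.mem_Icc]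
    exact abs_le.mp hb
  set P : Set (EuclideanSpace ℝ (Fin d)) :=
    {z | ∃ x : Fin m → Fin k, z = t0 + Δ • ∑ i, ((x i : ℕ) : ℝ) • e i} with hPdef
  have hP_range : P = Set.range p := by
    ext z
    simp only [hPdef, hpdef, Set.mem_setOf_eq, Set.mem_range]
    exact ⟨fun ⟨x, hx⟩ => ⟨x, hx.symm⟩, fun ⟨x, hx⟩ => ⟨x, hx.symm⟩⟩
  have hncard : Q.ncard = P.ncard := by
    rw [hP_range, hQdef, ← Nat.card_coe_set_eq, ← Nat.card_coe_set_eq,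
      Nat.card_range_of_injective hq_inj, Nat.card_range_of_injective hp_inj]
  refine ⟨Q, hQsub, Δ, hΔpos, P, ⟨t0, rfl⟩, hncard, ?_⟩
  intro z hz
  rw [hP_range] at hz
  obtain ⟨x, rfl⟩ := hz
  calc Metric.infDist (p x) Q ≤ dist (p x) (q x) :=
        Metric.infDist_le_dist_of_mem ⟨x, rfl⟩
    _ = ‖p x - q x‖ := dist_eq_norm _ _
    _ ≤ ε * Δ := hdiff x
end

section
/- Let d ≥ 2 and 1 ≤ m ≤ d be integers and let (ξ_j)_{j≥0} be any sequence with each ξ_j an m-tuple of unit vectors in ℝ^d. For the set K = {0} ∪ ⋃_{j≥0} D_j there exists a constant C > 0 such that N(B(x,R) ∩ K, r) ≤ C·(R/r)^m for all x ∈ K and all 0 < r < R. In particular, the Assouad dimension of K is at most m. -/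
open Metric Set Module

set_option maxHeartbeats 1000000 in
lemma exists_good_cover {d : ℕ} (V : Submodule ℝ (EuclideanSpace ℝ (Fin d)))
    (q : EuclideanSpace ℝ (Fin d)) (ρ r : ℝ) (hr : 0 < r) (hρ : 0 ≤ ρ) :
    ∃ 𝒰 : Finset (Set (EuclideanSpace ℝ (Fin d))),
      (∀ U ∈ 𝒰, IsOpen U ∧ Metric.diam U ≤ r) ∧
      ({p | p - q ∈ V ∧ ‖p - q‖ ≤ ρ} ⊆ ⋃₀ ↑𝒰) ∧
      ((𝒰.card : ℝ) ≤ ((4 * (finrank ℝ V) + 4) * ρ / r + 3) ^ (finrank ℝ V)) := by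
  classical
  set n := finrank ℝ V with hn
  let b := stdOrthonormalBasis ℝ V
  set s : ℝ := r / (2 * n + 2) with hs
  have hs0 : 0 < s := by positivity
  set M : ℤ := ⌊ρ / s⌋ + 1 with hM
  have hM0 : (0:ℤ) ≤ M := by
    have : (0:ℤ) ≤ ⌊ρ / s⌋ := Int.floor_nonneg.2 (by positivity)
    omega
  set ctr : (Fin n → ℤ) → EuclideanSpace ℝ (Fin d) :=
    fun z => q + ∑ i, ((z i : ℝ) * s) • (b i : EuclideanSpace ℝ (Fin d)) with hctr
  set T : Finset (Fin n → ℤ) := Fintype.piFinset fun _ => Finset.Icc (-M) M with hT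
  refine ⟨T.image (fun z => Metric.ball (ctr z) (r/2)), ?_, ?_, ?_⟩
  · intro U hU
    simp only [Finset.mem_image] at hU
    obtain ⟨z, _, rfl⟩ := hU
    refine ⟨Metric.isOpen_ball, ?_⟩
    calc Metric.diam (Metric.ball (ctr z) (r/2)) ≤ 2 * (r/2) := Metric.diam_ball (by linarith)
    _ = r := by ring
  · rintro p ⟨hpV, hpρ⟩
    set w : V := ⟨p - q, hpV⟩ with hw
    have hwn : ‖w‖ = ‖p - q‖ := rfl
    set c : Fin n → ℝ := fun i => b.repr w i with hc
    have hcb : ∀ i, |c i| ≤ ρ := by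
      intro i
      have := abs_real_inner_le_norm (b i) w
      rw [b.orthonormal.1 i] at this
      simp only [one_mul] at this
      calc |c i| = |inner ℝ (b i) w| := by rw [hc]; simp [b.repr_apply_apply]
        _ ≤ ‖w‖ := this
        _ ≤ ρ := by rw [hwn]; exact hpρ
    set z : Fin n → ℤ := fun i => round (c i / s) with hz
    have hzT : z ∈ T := by
      rw [hT, Fintype.mem_piFinset]
      intro i
      rw [Finset.mem_Icc, ← abs_le]
      have hzi : (z i : ℝ) = ((round (c i / s) : ℤ) : ℝ) := rfl
      have hrd := abs_sub_round (c i / s)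
      have h1 : |(z i : ℝ)| ≤ |c i / s| + 1/2 := by
        have h4 := abs_sub_abs_le_abs_sub ((z i : ℝ)) (c i / s)
        rw [abs_sub_comm, hzi] at h4
        linarith
      have h2 : |c i / s| ≤ ρ / s := by
        rw [abs_div, abs_of_pos hs0]
        gcongr
        exact hcb i
      have hMs : ρ / s < (M : ℝ) := by
        rw [hM]; push_cast; linarith [Int.lt_floor_add_one (ρ / s)]
      have h3 : |(z i : ℝ)| < (M : ℝ) + 1 := by linarith
      have h6 : |z i| < M + 1 := by exact_mod_cast h3
      omega
    refine Set.mem_sUnion.2 ⟨Metric.ball (ctr z) (r/2), by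
      simp only [Finset.coe_image, Set.mem_image, Finset.mem_coe]; exact ⟨z, hzT, rfl⟩, ?_⟩
    rw [Metric.mem_ball, dist_eq_norm]
    have key : p - ctr z = ((∑ i, (c i - (z i : ℝ) * s) • b i : V) : EuclideanSpace ℝ (Fin d)) := by
      push_cast
      have hrep : ((w : V) : EuclideanSpace ℝ (Fin d)) = ∑ i, c i • (b i : EuclideanSpace ℝ (Fin d)) := by
        conv_lhs => rw [← b.sum_repr w]
        push_cast
        rfl
      have : p - q = ∑ i, c i • (b i : EuclideanSpace ℝ (Fin d)) := by
        rw [← hrep]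
      rw [hctr]
      simp only [sub_smul]
      rw [Finset.sum_sub_distrib]
      rw [← this]
      abel
    have hnorm : ‖p - ctr z‖ ≤ n * (s / 2) := by
      rw [key]
      calc ‖((∑ i, (c i - (z i : ℝ) * s) • b i : V) : EuclideanSpace ℝ (Fin d))‖
          = ‖(∑ i, (c i - (z i : ℝ) * s) • b i : V)‖ := rfl
        _ ≤ ∑ i, ‖(c i - (z i : ℝ) * s) • b i‖ := norm_sum_le _ _
        _ ≤ ∑ _i : Fin n, s / 2 := by
            refine Finset.sum_le_sum fun i _ => ?_
            rw [norm_smul, b.orthonormal.1 i, mul_one]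
            have := abs_sub_round (c i / s)
            have hzi : (z i : ℝ) = ((round (c i / s) : ℤ) : ℝ) := rfl
            have heq : c i - (z i : ℝ) * s = (c i / s - round (c i / s)) * s := by
              rw [hzi, sub_mul, div_mul_cancel₀ _ hs0.ne']
            rw [Real.norm_eq_abs, heq, abs_mul, abs_of_pos hs0]
            calc |c i / s - ↑(round (c i / s))| * s ≤ (1/2) * s := by
                  exact mul_le_mul_of_nonneg_right this hs0.le
              _ = s / 2 := by ring
        _ = n * (s / 2) := by simp [mul_comm]
    have : (n : ℝ) * (s / 2) < r / 2 := by
      rw [hs, div_div, mul_div_assoc', div_lt_div_iff₀ (by positivity) (by norm_num : (0:ℝ) < 2)]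
      have hn0 : (0:ℝ) ≤ (n:ℝ) := Nat.cast_nonneg n
      nlinarith [hr]
    linarith
  · have hcard1 : (T.image (fun z => Metric.ball (ctr z) (r/2))).card ≤ T.card :=
      Finset.card_image_le
    have hTcard : T.card = (2 * M + 1).toNat ^ n := by
      rw [hT, Fintype.card_piFinset]
      simp only [Int.card_Icc]
      have : M + 1 - (-M) = 2 * M + 1 := by ring
      rw [this, Finset.prod_const, Finset.card_univ, Fintype.card_fin]
    have hbase : ((2 * M + 1).toNat : ℝ) ≤ (4 * n + 4) * ρ / r + 3 := by
      have hcast : ((2*M+1).toNat : ℝ) = 2*(M:ℝ)+1 := by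
        have h := Int.toNat_of_nonneg (show (0:ℤ) ≤ 2*M+1 by omega)
        exact_mod_cast h
      rw [hcast]
      have hfl : (M : ℝ) ≤ ρ / s + 1 := by
        rw [hM]; push_cast
        linarith [Int.floor_le (ρ / s)]
      have hss : ρ / s = (2 * n + 2) * ρ / r := by
        rw [hs]; field_simp
      rw [hss] at hfl
      have h7 : (4 * (n:ℝ) + 4) * ρ / r = 2 * ((2 * n + 2) * ρ / r) := by ring
      rw [h7]
      linarith
    calc ((T.image (fun z => Metric.ball (ctr z) (r/2))).card : ℝ)
        ≤ ((2 * M + 1).toNat ^ n : ℕ) := by exact_mod_cast hTcard ▸ hcard1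
      _ = ((2 * M + 1).toNat : ℝ) ^ n := by push_cast; ring
      _ ≤ ((4 * n + 4) * ρ / r + 3) ^ n := by gcongr



lemma stdE₁_norm {d : ℕ} (hd : 0 < d) : ‖stdE₁ d‖ = 1 := by
  have hfun : ∀ i : Fin d, stdE₁ d i = if (i : ℕ) = 0 then 1 else 0 := fun i => rfl
  rw [EuclideanSpace.norm_eq]
  have : ∑ i : Fin d, ‖stdE₁ d i‖ ^ 2 = 1 := by
    have h0 : (⟨0, hd⟩ : Fin d) ∈ Finset.univ := Finset.mem_univ _
    rw [Finset.sum_eq_single (⟨0, hd⟩ : Fin d)]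
    · rw [hfun]; norm_num
    · intro i _ hi
      rw [hfun]
      have : ¬ ((i : ℕ) = 0) := fun h => hi (Fin.ext h)
      simp [this]
    · intro h; exact (h h0).elim
  rw [this, Real.sqrt_one]

lemma Dcell_spec {d m : ℕ} (hm : 1 ≤ m) (ξ : ℕ → Fin m → EuclideanSpace ℝ (Fin d))
    (hξ : ∀ j i, ‖ξ j i‖ = 1) (j : ℕ) {p : EuclideanSpace ℝ (Fin d)} (hp : p ∈ Dcell m ξ j) :
    (p - ((1:ℝ)/2^j) • stdE₁ d) ∈ Submodule.span ℝ (Set.range (ξ j)) ∧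
    ‖p - ((1:ℝ)/2^j) • stdE₁ d‖ ≤ (1:ℝ)/2^(j+2) := by
  obtain ⟨t, ht, rfl⟩ := hp
  have heq : (∑ i, t i • ξ j i) + ((1:ℝ)/2^j) • stdE₁ d - ((1:ℝ)/2^j) • stdE₁ d
      = ∑ i, t i • ξ j i := by abel
  rw [heq]
  constructor
  · exact Submodule.sum_mem _ fun i _ =>
      Submodule.smul_mem _ _ (Submodule.subset_span ⟨i, rfl⟩)
  · have hm0 : (0:ℝ) < (m : ℝ) := by exact_mod_cast hm
    calc ‖∑ i, t i • ξ j i‖ ≤ ∑ i, ‖t i • ξ j i‖ := norm_sum_le _ _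
      _ = ∑ i, |t i| := by
          refine Finset.sum_congr rfl fun i _ => ?_
          rw [norm_smul, hξ j i, mul_one, Real.norm_eq_abs]
      _ ≤ ∑ _i : Fin m, 1 / ((m:ℝ) * 2^(j+2)) := by
          refine Finset.sum_le_sum fun i _ => ?_
          exact abs_le.2 ⟨(ht i).1, (ht i).2⟩
      _ = (m:ℝ) * (1 / ((m:ℝ) * 2^(j+2))) := by
          rw [Finset.sum_const, Finset.card_univ, Fintype.card_fin, nsmul_eq_mul]
      _ = 1/2^(j+2) := by field_simp
lemma Dcell_norm {d m : ℕ} (hm : 1 ≤ m) (hd : 0 < d) (ξ : ℕ → Fin m → EuclideanSpace ℝ (Fin d))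
    (hξ : ∀ j i, ‖ξ j i‖ = 1) (j : ℕ) {p : EuclideanSpace ℝ (Fin d)} (hp : p ∈ Dcell m ξ j) :
    (3/4) * ((1:ℝ)/2^j) ≤ ‖p‖ ∧ ‖p‖ ≤ (5/4) * ((1:ℝ)/2^j) := by
  obtain ⟨-, hn⟩ := Dcell_spec hm ξ hξ j hp
  have hc : ‖((1:ℝ)/2^j) • stdE₁ d‖ = (1:ℝ)/2^j := by
    rw [norm_smul, stdE₁_norm hd, mul_one, Real.norm_eq_abs, abs_of_pos (by positivity)]
  have h1 : ‖p‖ ≤ ‖p - ((1:ℝ)/2^j) • stdE₁ d‖ + ‖((1:ℝ)/2^j) • stdE₁ d‖ := by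
    have := norm_add_le (p - ((1:ℝ)/2^j) • stdE₁ d) (((1:ℝ)/2^j) • stdE₁ d)
    simpa using this
  have h2 : ‖((1:ℝ)/2^j) • stdE₁ d‖ - ‖p - ((1:ℝ)/2^j) • stdE₁ d‖ ≤ ‖p‖ := by
    have := norm_sub_norm_le (((1:ℝ)/2^j) • stdE₁ d) (((1:ℝ)/2^j) • stdE₁ d - p)
    simp only [sub_sub_cancel] at this
    rw [norm_sub_rev] at this
    linarith [this]
  have hq : (1:ℝ)/2^(j+2) = (1/4) * ((1:ℝ)/2^j) := by
    rw [pow_add]; ring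
  rw [hq] at hn
  rw [hc] at h1 h2
  constructor <;> linarith


set_option maxHeartbeats 2000000 in
/-- For any sequence `ξ_j` of `m`-tuples of unit vectors in `ℝ^d`, there is
`C > 0` with `N(B(x,R) ∩ K, r) ≤ C·(R/r)^m` for all `x ∈ K` and `0 < r < R`; in
particular `dim_A K ≤ m`, where `K = {0} ∪ ⋃_j D_j`. -/
theorem KsetD_coverNumber_le (d m : ℕ) (hd : 2 ≤ d) (hm : 1 ≤ m) (hmd : m ≤ d)
    (ξ : ℕ → Fin m → EuclideanSpace ℝ (Fin d)) (hξ : ∀ j i, ‖ξ j i‖ = 1) :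
    (∃ C > (0 : ℝ), ∀ x ∈ KsetD m ξ, ∀ R > (0 : ℝ), ∀ r ∈ Set.Ioo 0 R,
      (coverNumber (Metric.closedBall x R ∩ KsetD m ξ) r : ℝ) ≤ C * (R / r) ^ m) ∧
    assouadDim (KsetD m ξ) ≤ (m : ℝ) := by
  classical
  have hd0 : 0 < d := by omega
  set C : ℝ := (5*(d:ℝ)+8)^d + 2*(16*((m:ℝ)+4))^m + (8*(m:ℝ)+11)^m with hC
  have hCpos : 0 < C := by positivity
  have main : ∀ x ∈ KsetD m ξ, ∀ R > (0:ℝ), ∀ r ∈ Set.Ioo 0 R,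
      (coverNumber (Metric.closedBall x R ∩ KsetD m ξ) r : ℝ) ≤ C * (R / r) ^ m := by
    intro x hx R hR r hr
    obtain ⟨hr0, hrR⟩ := hr
    have hRr1 : 1 < R / r := (one_lt_div hr0).2 hrR
    have hex_a : ∃ a : ℕ, (1:ℝ)/2^a ≤ r := by
      obtain ⟨n, hn⟩ := exists_pow_lt_of_lt_one hr0 (by norm_num : (1:ℝ)/2 < 1)
      refine ⟨n, ?_⟩
      rw [div_pow, one_pow] at hn
      exact hn.le
    have hex_b : ∃ a : ℕ, (1:ℝ)/2^a ≤ 16*R := by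
      obtain ⟨a, ha⟩ := hex_a
      exact ⟨a, ha.trans (by nlinarith)⟩
    set a := Nat.find hex_a with ha_def
    set j₁ := Nat.find hex_b with hj₁_def
    have ha : (1:ℝ)/2^a ≤ r := Nat.find_spec hex_a
    have ha' : ∀ j < a, r < 1/2^j := fun j hj => lt_of_not_ge (Nat.find_min hex_a hj)
    have hj₁ : (1:ℝ)/2^j₁ ≤ 16*R := Nat.find_spec hex_b
    have hj₁' : ∀ j < j₁, 16*R < 1/2^j := fun j hj => lt_of_not_ge (Nat.find_min hex_b hj)
    set V : ℕ → Submodule ℝ (EuclideanSpace ℝ (Fin d)) :=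
      fun j => Submodule.span ℝ (Set.range (ξ j)) with hV
    have hVm : ∀ j, finrank ℝ (V j) ≤ m := by
      intro j
      exact (by simpa using finrank_range_le_card (ξ j) : Set.finrank ℝ (Set.range (ξ j)) ≤ m)
    obtain ⟨U0, hU0o, hU0c, hU0n⟩ :=
      exists_good_cover (⊤ : Submodule ℝ (EuclideanSpace ℝ (Fin d))) 0 ((5/4)*r) r hr0
        (by positivity)
    have h1 : ∀ j : ℕ, ∃ 𝒰 : Finset (Set (EuclideanSpace ℝ (Fin d))),
        (∀ U ∈ 𝒰, IsOpen U ∧ Metric.diam U ≤ r) ∧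
        ({p | p - ((1:ℝ)/2^j) • stdE₁ d ∈ V j ∧
            ‖p - ((1:ℝ)/2^j) • stdE₁ d‖ ≤ (1:ℝ)/2^(j+2)} ⊆ ⋃₀ ↑𝒰) ∧
        ((𝒰.card : ℝ) ≤
          ((4 * (finrank ℝ (V j)) + 4) * ((1:ℝ)/2^(j+2)) / r + 3) ^ (finrank ℝ (V j))) :=
      fun j => exists_good_cover (V j) (((1:ℝ)/2^j) • stdE₁ d) ((1:ℝ)/2^(j+2)) r hr0
        (by positivity)
    choose U1 hU1o hU1c hU1n using h1
    have sep : ∀ j j' : ℕ, j < j' → j < j₁ →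
        ∀ p ∈ Dcell m ξ j, ∀ p' ∈ Dcell m ξ j',
        p ∈ Metric.closedBall x R → p' ∈ Metric.closedBall x R → False := by
      intro j j' hjj hjj₁ p hp p' hp' hpB hp'B
      have h₁ := (Dcell_norm hm hd0 ξ hξ j hp).1
      have h₂ := (Dcell_norm hm hd0 ξ hξ j' hp').2
      have hdd : dist p p' ≤ 2*R := by
        rw [Metric.mem_closedBall] at hpB hp'B
        calc dist p p' ≤ dist p x + dist x p' := dist_triangle _ _ _
          _ ≤ R + R := by rw [dist_comm x p']; exact add_le_add hpB hp'B
          _ = 2*R := by ring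
      have hpow : (1:ℝ)/2^j' ≤ (1/2)*((1:ℝ)/2^j) := by
        have h2p : (2:ℝ)^(j+1) ≤ 2^j' := pow_le_pow_right₀ one_le_two hjj
        have := one_div_le_one_div_of_le (by positivity : (0:ℝ) < 2^(j+1)) h2p
        calc (1:ℝ)/2^j' ≤ 1/2^(j+1) := this
          _ = (1/2)*((1:ℝ)/2^j) := by rw [pow_succ]; ring
      have h3 : 16*R < 1/2^j := hj₁' j hjj₁
      have h4 : ‖p‖ - ‖p'‖ ≤ ‖p - p'‖ := norm_sub_norm_le p p'
      rw [dist_eq_norm] at hdd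
      linarith
    have h2 : ∃ 𝒰₂ : Finset (Set (EuclideanSpace ℝ (Fin d))),
        (∀ U ∈ 𝒰₂, IsOpen U ∧ Metric.diam U ≤ r) ∧
        (∀ j < j₁, Dcell m ξ j ∩ Metric.closedBall x R ⊆ ⋃₀ ↑𝒰₂) ∧
        ((𝒰₂.card : ℝ) ≤ ((8*(m:ℝ)+11)*(R/r))^m) := by
      by_cases hbig : ∃ j, j < j₁ ∧ (Dcell m ξ j ∩ Metric.closedBall x R).Nonempty
      · obtain ⟨js, hjs, q₀, hq₀D, hq₀B⟩ := hbig
        obtain ⟨U2, hU2o, hU2c, hU2n⟩ :=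
          exists_good_cover (V js) q₀ (2*R) r hr0 (by positivity)
        refine ⟨U2, hU2o, ?_, ?_⟩
        · intro j hj p hp
          obtain ⟨hpD, hpB⟩ := hp
          have hjeq : j = js := by
            rcases lt_trichotomy j js with h|h|h
            · exact (sep j js h hj p hpD q₀ hq₀D hpB hq₀B).elim
            · exact h
            · exact (sep js j h hjs q₀ hq₀D p hpD hq₀B hpB).elim
          subst hjeq
          apply hU2c
          constructor
          · have hp1 := (Dcell_spec hm ξ hξ j hpD).1
            have hq1 := (Dcell_spec hm ξ hξ j hq₀D).1
            have heq2 : p - q₀ =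
                (p - ((1:ℝ)/2^j) • stdE₁ d) - (q₀ - ((1:ℝ)/2^j) • stdE₁ d) := by abel
            rw [heq2]
            exact Submodule.sub_mem _ hp1 hq1
          · rw [show ‖p - q₀‖ = dist p q₀ from (dist_eq_norm p q₀).symm]
            rw [Metric.mem_closedBall] at hpB hq₀B
            calc dist p q₀ ≤ dist p x + dist x q₀ := dist_triangle _ _ _
              _ ≤ R + R := by rw [dist_comm x q₀]; exact add_le_add hpB hq₀B
              _ = 2*R := by ring
        · refine hU2n.trans ?_
          have h4 : ((finrank ℝ (V js) : ℝ)) ≤ m := by exact_mod_cast hVm js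
          have hbase : (4*((finrank ℝ (V js)):ℝ)+4) * (2*R)/r + 3 ≤ (8*(m:ℝ)+11)*(R/r) := by
            have h5 : (3:ℝ) ≤ 3*(R/r) := by nlinarith
            have h6 : (4*((finrank ℝ (V js)):ℝ)+4)*(2*R)/r
                = (8*((finrank ℝ (V js)):ℝ)+8)*(R/r) := by field_simp; ring
            rw [h6]
            nlinarith
          have hone : (1:ℝ) ≤ (8*(m:ℝ)+11)*(R/r) := by
            have hm0 : (0:ℝ) ≤ (m:ℝ) := Nat.cast_nonneg m
            nlinarith
          calc ((4*((finrank ℝ (V js)):ℝ)+4) * (2*R)/r + 3)^(finrank ℝ (V js))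
              ≤ ((8*(m:ℝ)+11)*(R/r))^(finrank ℝ (V js)) :=
                pow_le_pow_left₀ (by positivity) hbase _
            _ ≤ ((8*(m:ℝ)+11)*(R/r))^m := pow_le_pow_right₀ hone (hVm js)
      · refine ⟨∅, by simp, ?_, ?_⟩
        · intro j hj p hp
          exact absurd ⟨j, hj, ⟨p, hp⟩⟩ hbig
        · simp only [Finset.card_empty, Nat.cast_zero]
          exact pow_nonneg (mul_nonneg (by positivity) (div_nonneg hR.le hr0.le)) m
    obtain ⟨U2, hU2o, hU2c, hU2n⟩ := h2
    set bigU : Finset (Set (EuclideanSpace ℝ (Fin d))) :=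
      (U0 ∪ (Finset.Ico j₁ a).biUnion U1) ∪ U2 with hbigU
    have hbigo : ∀ U ∈ bigU, IsOpen U ∧ Metric.diam U ≤ r := by
      intro U hU
      rw [hbigU, Finset.mem_union, Finset.mem_union] at hU
      rcases hU with (hU|hU)|hU
      · exact hU0o U hU
      · rw [Finset.mem_biUnion] at hU
        obtain ⟨j, _, hU⟩ := hU
        exact hU1o j U hU
      · exact hU2o U hU
    have hcov : Metric.closedBall x R ∩ KsetD m ξ ⊆ ⋃₀ ↑bigU := by
      rintro p ⟨hpB, hpK⟩
      simp only [KsetD, Set.mem_union, Set.mem_singleton_iff, Set.mem_iUnion] at hpK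
      have lift0 : p ∈ ⋃₀ ↑U0 → p ∈ ⋃₀ ↑bigU := by
        rintro ⟨U, hU, hpU⟩
        refine ⟨U, ?_, hpU⟩
        rw [hbigU]
        simp only [Finset.coe_union, Set.mem_union]
        exact Or.inl (Or.inl hU)
      rcases hpK with hp0 | ⟨j, hpj⟩
      · apply lift0
        apply hU0c
        refine ⟨Submodule.mem_top, ?_⟩
        rw [hp0]
        simp only [sub_zero, norm_zero]
        positivity
      · rcases le_or_gt a j with hja | hja
        · apply lift0
          apply hU0c
          refine ⟨Submodule.mem_top, ?_⟩
          rw [sub_zero]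
          have hb := (Dcell_norm hm hd0 ξ hξ j hpj).2
          have hmono : (1:ℝ)/2^j ≤ 1/2^a :=
            one_div_le_one_div_of_le (by positivity) (pow_le_pow_right₀ one_le_two hja)
          calc ‖p‖ ≤ (5/4) * ((1:ℝ)/2^j) := hb
            _ ≤ (5/4) * ((1:ℝ)/2^a) := by linarith
            _ ≤ (5/4) * r := by linarith
        · rcases le_or_gt j₁ j with hjj₁ | hjj₁
          · have hmem : p ∈ ⋃₀ ↑(U1 j) := by
              apply hU1c
              exact ⟨(Dcell_spec hm ξ hξ j hpj).1, (Dcell_spec hm ξ hξ j hpj).2⟩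
            obtain ⟨U, hU, hpU⟩ := hmem
            refine ⟨U, ?_, hpU⟩
            rw [hbigU]
            simp only [Finset.coe_union, Set.mem_union, Finset.mem_coe, Finset.mem_biUnion]
            exact Or.inl (Or.inr ⟨j, Finset.mem_Ico.2 ⟨hjj₁, hja⟩, hU⟩)
          · have hmem : p ∈ ⋃₀ ↑U2 := hU2c j hjj₁ ⟨hpj, hpB⟩
            obtain ⟨U, hU, hpU⟩ := hmem
            refine ⟨U, ?_, hpU⟩
            rw [hbigU]
            simp only [Finset.coe_union, Set.mem_union, Finset.mem_coe]
            exact Or.inr hU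
    have hcn : coverNumber (Metric.closedBall x R ∩ KsetD m ξ) r ≤ bigU.card :=
      Nat.sInf_le ⟨bigU, rfl, hbigo, hcov⟩
    -- card bounds
    have hft : finrank ℝ (⊤ : Submodule ℝ (EuclideanSpace ℝ (Fin d))) = d := by
      rw [finrank_top]; exact finrank_euclideanSpace_fin
    rw [hft] at hU0n
    have hU0n' : (U0.card : ℝ) ≤ (5*(d:ℝ)+8)^d := by
      have he : (4*(d:ℝ)+4) * ((5/4)*r)/r + 3 = 5*(d:ℝ)+8 := by field_simp; ring
      rw [he] at hU0n
      exact hU0n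
    have hterm : ∀ j ∈ Finset.Ico j₁ a,
        ((U1 j).card : ℝ) ≤ (((m:ℝ)+4)/r)^m * (((1:ℝ)/2)^m)^j := by
      intro j hj
      rw [Finset.mem_Ico] at hj
      have hrj : r < 1/2^j := ha' j hj.2
      have hX1 : 1 < ((1:ℝ)/2^j)/r := (one_lt_div hr0).2 hrj
      have hX0 : 0 < ((1:ℝ)/2^j)/r := by positivity
      have hn4 : ((finrank ℝ (V j) : ℝ)) ≤ m := by exact_mod_cast hVm j
      have hb1 : (4*((finrank ℝ (V j)):ℝ)+4) * ((1:ℝ)/2^(j+2))/r + 3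
          ≤ ((m:ℝ)+4)*(((1:ℝ)/2^j)/r) := by
        have he1 : (4*((finrank ℝ (V j)):ℝ)+4) * ((1:ℝ)/2^(j+2))/r
            = (((finrank ℝ (V j)):ℝ)+1)*(((1:ℝ)/2^j)/r) := by
          rw [pow_add]
          field_simp
          ring
        rw [he1]
        nlinarith
      have hone : (1:ℝ) ≤ ((m:ℝ)+4)*(((1:ℝ)/2^j)/r) := by
        have hm0 : (0:ℝ) ≤ (m:ℝ) := Nat.cast_nonneg m
        nlinarith
      have hchain : ((U1 j).card : ℝ) ≤ (((m:ℝ)+4)*(((1:ℝ)/2^j)/r))^m := by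
        calc ((U1 j).card : ℝ)
            ≤ ((4*((finrank ℝ (V j)):ℝ)+4) * ((1:ℝ)/2^(j+2))/r + 3)^(finrank ℝ (V j)) :=
              hU1n j
          _ ≤ (((m:ℝ)+4)*(((1:ℝ)/2^j)/r))^(finrank ℝ (V j)) :=
              pow_le_pow_left₀ (by positivity) hb1 _
          _ ≤ (((m:ℝ)+4)*(((1:ℝ)/2^j)/r))^m := pow_le_pow_right₀ hone (hVm j)
      refine hchain.trans (le_of_eq ?_)
      have hbase2 : ((m:ℝ)+4) * (((1:ℝ)/2^j)/r) = (((m:ℝ)+4)/r) * ((1:ℝ)/2)^j := by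
        rw [div_pow, one_pow]
        ring
      rw [hbase2, mul_pow, pow_right_comm]
    have hsumgeom : ∑ j ∈ Finset.Ico j₁ a, (((1:ℝ)/2)^m)^j ≤ 2 * (16*R)^m := by
      set t : ℝ := ((1:ℝ)/2)^m with ht_def
      have ht0 : 0 ≤ t := by positivity
      have ht2 : t ≤ 1/2 := by
        calc t = ((1:ℝ)/2)^m := rfl
          _ ≤ ((1:ℝ)/2)^1 := pow_le_pow_of_le_one (by norm_num) (by norm_num) hm
          _ = 1/2 := by norm_num
      have h1' : ∑ j ∈ Finset.Ico j₁ a, t^j = t^j₁ * ∑ k ∈ Finset.range (a - j₁), t^k := by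
        rw [Finset.sum_Ico_eq_sum_range]
        rw [Finset.mul_sum]
        exact Finset.sum_congr rfl fun k _ => by rw [pow_add]
      have h2' : ∑ k ∈ Finset.range (a - j₁), t^k ≤ 2 := by
        calc ∑ k ∈ Finset.range (a - j₁), t^k
            ≤ ∑ k ∈ Finset.range (a - j₁), ((1:ℝ)/2)^k :=
              Finset.sum_le_sum fun k _ => pow_le_pow_left₀ ht0 ht2 k
          _ ≤ 2 := sum_geometric_two_le _
      have h3' : t^j₁ ≤ (16*R)^m := by
        have : t^j₁ = (((1:ℝ)/2^j₁))^m := by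
          rw [ht_def, ← pow_mul, mul_comm m j₁, pow_mul]
          congr 1
          rw [div_pow, one_pow]
        rw [this]
        exact pow_le_pow_left₀ (by positivity) hj₁ m
      calc ∑ j ∈ Finset.Ico j₁ a, t^j = t^j₁ * ∑ k ∈ Finset.range (a - j₁), t^k := h1'
        _ ≤ (16*R)^m * 2 := by
            have h0 : (0:ℝ) ≤ t^j₁ := by positivity
            have h00 : (0:ℝ) ≤ ∑ k ∈ Finset.range (a - j₁), t^k :=
              Finset.sum_nonneg fun k _ => by positivity
            nlinarith
        _ = 2 * (16*R)^m := by ring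
    have hsum : (∑ j ∈ Finset.Ico j₁ a, ((U1 j).card : ℝ))
        ≤ 2*(16*((m:ℝ)+4))^m * (R/r)^m := by
      calc (∑ j ∈ Finset.Ico j₁ a, ((U1 j).card : ℝ))
          ≤ ∑ j ∈ Finset.Ico j₁ a, (((m:ℝ)+4)/r)^m * (((1:ℝ)/2)^m)^j :=
            Finset.sum_le_sum hterm
        _ = (((m:ℝ)+4)/r)^m * ∑ j ∈ Finset.Ico j₁ a, (((1:ℝ)/2)^m)^j := by
            rw [Finset.mul_sum]
        _ ≤ (((m:ℝ)+4)/r)^m * (2 * (16*R)^m) := by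
            have h0 : (0:ℝ) ≤ (((m:ℝ)+4)/r)^m := by positivity
            exact mul_le_mul_of_nonneg_left hsumgeom h0
        _ = 2 * ((((m:ℝ)+4)/r) * (16*R))^m := by
            rw [mul_pow (((m:ℝ)+4)/r) (16*R)]; ring
        _ = 2 * ((16*((m:ℝ)+4)) * (R/r))^m := by
            rw [show (((m:ℝ)+4)/r) * (16*R) = (16*((m:ℝ)+4)) * (R/r) from by field_simp]
        _ = 2*(16*((m:ℝ)+4))^m * (R/r)^m := by rw [mul_pow]; ring
    have hcard : (bigU.card : ℝ)
        ≤ (5*(d:ℝ)+8)^d + 2*(16*((m:ℝ)+4))^m * (R/r)^m + (8*(m:ℝ)+11)^m * (R/r)^m := by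
      have hstep : (bigU.card : ℕ)
          ≤ U0.card + (∑ j ∈ Finset.Ico j₁ a, (U1 j).card) + U2.card := by
        calc bigU.card ≤ (U0 ∪ (Finset.Ico j₁ a).biUnion U1).card + U2.card :=
              Finset.card_union_le _ _
          _ ≤ (U0.card + ((Finset.Ico j₁ a).biUnion U1).card) + U2.card := by
              have := Finset.card_union_le U0 ((Finset.Ico j₁ a).biUnion U1)
              omega
          _ ≤ (U0.card + ∑ j ∈ Finset.Ico j₁ a, (U1 j).card) + U2.card := by
              have := Finset.card_biUnion_le (s := Finset.Ico j₁ a) (t := U1)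
              omega
      have hcast : (bigU.card : ℝ)
          ≤ (U0.card : ℝ) + (∑ j ∈ Finset.Ico j₁ a, ((U1 j).card : ℝ)) + (U2.card : ℝ) := by
        push_cast
        exact_mod_cast hstep
      have hU2n' : (U2.card : ℝ) ≤ (8*(m:ℝ)+11)^m * (R/r)^m := by
        rw [← mul_pow]
        exact hU2n
      linarith
    have hpow1 : (1:ℝ) ≤ (R/r)^m := one_le_pow₀ hRr1.le
    have hfin : (coverNumber (Metric.closedBall x R ∩ KsetD m ξ) r : ℝ) ≤ (bigU.card : ℝ) := by
      exact_mod_cast hcn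
    have hA : (0:ℝ) ≤ (5*(d:ℝ)+8)^d := by positivity
    have hkey : (5*(d:ℝ)+8)^d + 2*(16*((m:ℝ)+4))^m * (R/r)^m + (8*(m:ℝ)+11)^m * (R/r)^m
        ≤ C * (R/r)^m := by
      rw [hC]
      have := mul_nonneg hA (sub_nonneg.2 hpow1)
      nlinarith
    linarith
  refine ⟨⟨C, hCpos, main⟩, ?_⟩
  apply csInf_le
  · exact ⟨0, fun σ hσ => hσ.1⟩
  · refine ⟨Nat.cast_nonneg m, C, hCpos, fun x hx R hR r hr => ?_⟩
    rw [Real.rpow_natCast]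
    exact main x hx R hR r hr
end
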